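/- arXiv:1612.01712 — 9 statements merged into one kernel-verified Lean document; each statement's English description precedes it below -/
import Mathlib

section
/- Let f(x) = a_n x^n + ... + a_1 x + a_0 be a polynomial with integer coefficients satisfying 0 < a_0 ≤ a_1 ≤ ... ≤ a_{k-1} < a_k < a_{k+1} ≤ ... ≤ a_{n-1} ≤ a_n for some k with 0 ≤ k ≤ n-1. Then every complex zero α of f satisfies |α| < 1. -/
open Polynomial Finset

set_option maxHeartbeats 1600000 in
theorem stmt_0 (n k : ℕ) (a : ℕ → ℤ) (hn : 1 ≤ n) (hk : k ≤ n - 1)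
    (h0 : 0 < a 0)
    (hmono : ∀ i, i < n → a i ≤ a (i + 1))
    (hstrict1 : 0 < k → a (k - 1) < a k)
    (hstrict2 : a k < a (k + 1))
    (α : ℂ)
    (hα : Polynomial.aeval α (∑ i ∈ Finset.range (n + 1), Polynomial.C (a i) * Polynomial.X ^ i) = 0) :
    ‖α‖ < 1 := by
  by_contra hcon
  push_neg at hcon
  have hr : 1 ≤ ‖α‖ := hcon
  -- positivity of coefficients
  have hpos : ∀ i, i ≤ n → 0 < a i := by
    intro i hi
    induction i with
    | zero => exact h0
    | succ j ih =>
        exact lt_of_lt_of_le (ih (Nat.le_of_succ_le hi))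
          (hmono j (lt_of_lt_of_le (Nat.lt_succ_self j) hi))
  -- the evaluated sum
  have heval : (∑ i ∈ Finset.range (n+1), (a i : ℂ) * α ^ i) = 0 := by
    simpa using hα
  -- key telescoping identity
  have key : (a n : ℂ) * α ^ (n+1)
      = (a 0 : ℂ) + ∑ i ∈ Finset.range n, ((a (i+1) : ℂ) - (a i : ℂ)) * α ^ (i+1) := by
    have h1 : (∑ i ∈ Finset.range (n+1), (a i : ℂ) * α ^ (i+1)) = 0 := by
      have h := congrArg (fun z => α * z) heval
      simp only [Finset.mul_sum, mul_zero] at h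
      rw [← h]
      apply Finset.sum_congr rfl
      intro i _
      ring
    have e1 : ∑ i ∈ Finset.range n, ((a (i+1) : ℂ) - (a i : ℂ)) * α ^ (i+1)
        = (∑ i ∈ Finset.range n, (a (i+1):ℂ) * α^(i+1)) - ∑ i ∈ Finset.range n, (a i:ℂ)*α^(i+1) := by
      rw [← Finset.sum_sub_distrib]
      apply Finset.sum_congr rfl
      intro i _
      ring
    have e2 : (∑ i ∈ Finset.range n, (a (i+1):ℂ) * α^(i+1)) + (a 0 : ℂ) = 0 := by
      rw [← heval, Finset.sum_range_succ']
      simp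
    have e3 := Finset.sum_range_succ (fun i => (a i : ℂ) * α^(i+1)) n
    rw [h1] at e3
    rw [e1]
    linear_combination -e3 - e2
  -- |α| = 1
  have hr1 : ‖α‖ = 1 := by
    set r := ‖α‖ with hrdef
    have hrn : (1:ℝ) ≤ r ^ n := one_le_pow₀ hr
    have habs : (a n : ℝ) * r ^ (n+1) ≤ (a n : ℝ) * r ^ n := by
      have lhs : ‖(a n : ℂ) * α ^ (n+1)‖ = (a n : ℝ) * r ^ (n+1) := by
        rw [norm_mul, norm_pow]
        congr 1
        rw [Complex.norm_intCast, abs_of_pos]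
        exact_mod_cast hpos n le_rfl
      have rhs : ‖(a 0 : ℂ) + ∑ i ∈ Finset.range n, ((a (i+1) : ℂ) - (a i : ℂ)) * α ^ (i+1)‖
          ≤ (a 0 : ℝ) * r ^ n + ∑ i ∈ Finset.range n, ((a (i+1) : ℝ) - (a i : ℝ)) * r ^ n := by
        refine le_trans (norm_add_le _ _) (add_le_add ?_ ?_)
        · rw [Complex.norm_intCast, abs_of_pos (by exact_mod_cast hpos 0 (by omega))]
          nlinarith [hpos 0 (Nat.zero_le n), (by exact_mod_cast hpos 0 (Nat.zero_le n) : (0:ℝ) < a 0)]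
        · refine le_trans (norm_sum_le _ _) (Finset.sum_le_sum ?_)
          intro i hi
          rw [Finset.mem_range] at hi
          rw [norm_mul, norm_pow]
          have hd : (0:ℝ) ≤ (a (i+1) : ℝ) - (a i : ℝ) := by
            have := hmono i hi
            linarith [(by exact_mod_cast this : (a i : ℝ) ≤ a (i+1))]
          have : ‖(a (i+1) : ℂ) - (a i : ℂ)‖ = (a (i+1) : ℝ) - (a i : ℝ) := by
            rw [show ((a (i+1) : ℂ) - (a i : ℂ)) = (((a (i+1) : ℝ) - (a i : ℝ) : ℝ) : ℂ) by push_cast; ring,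
              Complex.norm_real, Real.norm_eq_abs, abs_of_nonneg hd]
          rw [this]
          apply mul_le_mul_of_nonneg_left _ hd
          exact pow_le_pow_right₀ hr hi
      have tele : ∑ i ∈ Finset.range n, ((a (i+1) : ℝ) - (a i : ℝ)) * r ^ n = ((a n : ℝ) - (a 0 : ℝ)) * r ^ n := by
        rw [← Finset.sum_mul, Finset.sum_range_sub (fun i => (a i : ℝ))]
      calc (a n : ℝ) * r ^ (n+1) = ‖(a n : ℂ) * α ^ (n+1)‖ := lhs.symm
        _ = ‖(a 0 : ℂ) + ∑ i ∈ Finset.range n, ((a (i+1) : ℂ) - (a i : ℂ)) * α ^ (i+1)‖ := by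
            rw [key]
        _ ≤ (a 0 : ℝ) * r ^ n + ((a n : ℝ) - (a 0 : ℝ)) * r ^ n := by rw [← tele]; exact rhs
        _ = (a n : ℝ) * r ^ n := by ring
    have han : (0:ℝ) < (a n : ℝ) := by exact_mod_cast hpos n le_rfl
    have hrle : r ≤ 1 := by
      by_contra hgt
      push_neg at hgt
      have : r ^ n < r ^ (n+1) := pow_lt_pow_right₀ hgt (by omega)
      nlinarith
    linarith
  -- equality analysis: α^(n+1) = 1 and α^(j+1) = 1 at strict increases
  have main : α ^ (n+1) = 1 ∧ ∀ j, j < n → a j < a (j+1) → α ^ (j+1) = 1 := by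
    set u := α ^ (n+1) with hu
    have habsu : ‖u‖ = 1 := by rw [hu, norm_pow, hr1, one_pow]
    have hcu : u * (starRingEnd ℂ) u = 1 := by
      rw [Complex.mul_conj]
      norm_cast
      rw [← Complex.sq_norm, habsu]; norm_num
    have E2 : (a n : ℂ) = (a 0 : ℂ) * (starRingEnd ℂ) u
        + ∑ i ∈ Finset.range n, ((a (i+1) : ℂ) - (a i : ℂ)) * α ^ (i+1) * (starRingEnd ℂ) u := by
      have := congrArg (fun z => z * (starRingEnd ℂ) u) key
      calc (a n : ℂ) = (a n : ℂ) * (u * (starRingEnd ℂ) u) := by rw [hcu, mul_one]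
        _ = ((a n : ℂ) * u) * (starRingEnd ℂ) u := by ring
        _ = _ := by rw [this, add_mul, Finset.sum_mul]
    have Ere : (a n : ℝ) = ((a 0 : ℂ) * (starRingEnd ℂ) u).re
        + ∑ i ∈ Finset.range n, (((a (i+1) : ℂ) - (a i : ℂ)) * α ^ (i+1) * (starRingEnd ℂ) u).re := by
      have := congrArg Complex.re E2
      simpa [Complex.add_re, Complex.re_sum] using this
    have bd0 : ((a 0 : ℂ) * (starRingEnd ℂ) u).re ≤ (a 0 : ℝ) := by
      refine le_trans (Complex.re_le_norm _) ?_
      rw [norm_mul, Complex.norm_intCast, Complex.norm_conj, habsu, mul_one]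
      exact le_of_eq (abs_of_pos (by exact_mod_cast hpos 0 (Nat.zero_le n)))
    have bdi : ∀ i ∈ Finset.range n, (((a (i+1) : ℂ) - (a i : ℂ)) * α ^ (i+1) * (starRingEnd ℂ) u).re
        ≤ (a (i+1) : ℝ) - (a i : ℝ) := by
      intro i hi
      rw [Finset.mem_range] at hi
      refine le_trans (Complex.re_le_norm _) ?_
      rw [norm_mul, norm_mul, norm_pow, hr1, Complex.norm_conj, habsu, one_pow, mul_one, mul_one]
      rw [show ((a (i+1) : ℂ) - (a i : ℂ)) = (((a (i+1) : ℝ) - (a i : ℝ) : ℝ) : ℂ) by push_cast; ring,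
        Complex.norm_real, Real.norm_eq_abs]
      have hd : (0:ℝ) ≤ (a (i+1) : ℝ) - (a i : ℝ) := by
        have := hmono i hi
        have : (a i : ℝ) ≤ (a (i+1) : ℝ) := by exact_mod_cast this
        linarith
      exact le_of_eq (abs_of_nonneg hd)
    have tele : ∑ i ∈ Finset.range n, ((a (i+1) : ℝ) - (a i : ℝ)) = (a n : ℝ) - (a 0 : ℝ) :=
      Finset.sum_range_sub (fun i => (a i : ℝ)) n
    have sumle := Finset.sum_le_sum bdi
    have h0eq : ((a 0 : ℂ) * (starRingEnd ℂ) u).re = (a 0 : ℝ) := by linarith [sumle, tele ▸ sumle]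
    have hieq : ∀ j, j < n → (((a (j+1) : ℂ) - (a j : ℂ)) * α ^ (j+1) * (starRingEnd ℂ) u).re
        = (a (j+1) : ℝ) - (a j : ℝ) := by
      intro j hj
      by_contra hne
      have hlt : (((a (j+1) : ℂ) - (a j : ℂ)) * α ^ (j+1) * (starRingEnd ℂ) u).re
          < (a (j+1) : ℝ) - (a j : ℝ) := lt_of_le_of_ne (bdi j (Finset.mem_range.mpr hj)) hne
      have : ∑ i ∈ Finset.range n, (((a (i+1) : ℂ) - (a i : ℂ)) * α ^ (i+1) * (starRingEnd ℂ) u).re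
          < ∑ i ∈ Finset.range n, ((a (i+1) : ℝ) - (a i : ℝ)) :=
        Finset.sum_lt_sum bdi ⟨j, Finset.mem_range.mpr hj, hlt⟩
      rw [tele] at this
      linarith
    have ha0 : (0:ℝ) < (a 0 : ℝ) := by exact_mod_cast hpos 0 (Nat.zero_le n)
    have hure : u.re = 1 := by
      have : ((a 0 : ℂ) * (starRingEnd ℂ) u).re = (a 0 : ℝ) * u.re := by
        simp [Complex.mul_re, Complex.conj_re, Complex.conj_im]
      rw [this] at h0eq
      have := mul_left_cancel₀ (ne_of_gt ha0) (h0eq.trans (mul_one (a 0 : ℝ)).symm)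
      exact this
    have hu1 : u = 1 := by
      have hsq : Complex.normSq u = 1 := by rw [← Complex.sq_norm, habsu]; norm_num
      have him : u.im * u.im = 0 := by
        have h' := Complex.normSq_apply u
        rw [hsq, hure] at h'
        linarith
      exact Complex.ext hure (mul_self_eq_zero.mp him)
    refine ⟨hu1, ?_⟩
    intro j hj hstrict
    have hd : (0:ℝ) < (a (j+1) : ℝ) - (a j : ℝ) := by
      have : (a j : ℝ) < (a (j+1) : ℝ) := by exact_mod_cast hstrict
      linarith
    have := hieq j hj
    rw [hu1, map_one, mul_one] at this
    have hre : (α ^ (j+1)).re = 1 := by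
      have expand : (((a (j+1) : ℂ) - (a j : ℂ)) * α ^ (j+1)).re
          = ((a (j+1) : ℝ) - (a j : ℝ)) * (α ^ (j+1)).re := by
        rw [show ((a (j+1) : ℂ) - (a j : ℂ)) = (((a (j+1) : ℝ) - (a j : ℝ) : ℝ) : ℂ) by push_cast; ring]
        simp [Complex.mul_re]
      rw [expand] at this
      exact mul_left_cancel₀ (ne_of_gt hd) (this.trans (mul_one _).symm)
    have habsj : ‖α ^ (j+1)‖ = 1 := by rw [norm_pow, hr1, one_pow]
    have hsq : Complex.normSq (α ^ (j+1)) = 1 := by rw [← Complex.sq_norm, habsj]; norm_num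
    have him : (α ^ (j+1)).im * (α ^ (j+1)).im = 0 := by
      have h' := Complex.normSq_apply (α ^ (j+1))
      rw [hsq, hre] at h'
      linarith
    exact Complex.ext hre (mul_self_eq_zero.mp him)
  -- deduce α = 1
  have hkn : k < n := by omega
  have hα1 : α = 1 := by
    have hk1 : α ^ (k+1) = 1 := main.2 k hkn hstrict2
    rcases Nat.eq_zero_or_pos k with hk0 | hkpos
    · subst hk0
      simpa using hk1
    · have hk2 : α ^ k = 1 := by
        have h' := main.2 (k-1) (by omega)
        rw [show k - 1 + 1 = k from by omega] at h'
        exact h' (hstrict1 hkpos)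
      have : α ^ (k+1) = α ^ k * α := by ring
      rw [hk1, hk2, one_mul] at this
      exact this.symm
  -- contradiction: f(1) > 0
  rw [hα1] at heval
  simp only [one_pow, mul_one] at heval
  have hz : (∑ i ∈ Finset.range (n+1), a i) = 0 := by
    have : ((∑ i ∈ Finset.range (n+1), a i : ℤ) : ℂ) = 0 := by push_cast; exact heval
    exact_mod_cast this
  have hzpos : 0 < ∑ i ∈ Finset.range (n+1), a i := by
    apply Finset.sum_pos
    · intro i hi
      exact hpos i (Nat.lt_succ_iff.mp (Finset.mem_range.mp hi))
    · exact ⟨0, Finset.mem_range.mpr (by omega)⟩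
  omega
end

section
/- Let f ∈ ℤ[x] be a nonconstant polynomial all of whose complex zeros lie in the open unit disc {z ∈ ℂ : |z| < 1}. If m is an integer with |m| ≥ 2 such that |f(m)| is prime, then f is irreducible in ℤ[x]. -/
open Polynomial

lemma key_eval_big (g : Polynomial ℤ) (hg : 0 < g.natDegree)
    (hroots : ∀ α : ℂ, Polynomial.aeval α g = 0 → ‖α‖ < 1)
    (m : ℤ) (hm : 2 ≤ |m|) : 1 < |g.eval m| := by
  have hg0 : g ≠ 0 := fun h => by simp [h] at hg
  set G : Polynomial ℂ := g.map (Int.castRingHom ℂ) with hGdef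
  have hinj : Function.Injective (Int.castRingHom ℂ) := Int.cast_injective
  have hG0 : G ≠ 0 := by
    simpa [hGdef] using (Polynomial.map_ne_zero_iff hinj).mpr hg0
  have hsplit : G.Splits := IsAlgClosed.splits G
  have hGfact := hsplit.eq_prod_roots
  have hcard : G.roots.card = g.natDegree := by
    rw [(Polynomial.splits_iff_card_roots).mp hsplit]
    simpa [hGdef] using Polynomial.natDegree_map_eq_of_injective hinj g
  have hevalG : G.eval (m : ℂ) = ((g.eval m : ℤ) : ℂ) := by
    simp [hGdef, Polynomial.eval_map, Polynomial.eval₂_at_intCast]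
  -- abs of eval
  have heq : ‖G.eval (m : ℂ)‖ =
      ‖G.leadingCoeff‖ *
        (G.roots.map fun a => ‖(m : ℂ) - a‖).prod := by
    conv_lhs => rw [hGfact]
    rw [Polynomial.eval_mul, Polynomial.eval_multiset_prod, norm_mul, Polynomial.eval_C,
      Multiset.map_map]
    congr 1
    exact (map_multiset_prod (normHom (α := ℂ)) _).trans (by simp [Multiset.map_map, Function.comp_def])
  -- leading coeff
  have hlead : 1 ≤ ‖G.leadingCoeff‖ := by
    rw [hGdef, Polynomial.leadingCoeff_map_of_injective hinj]
    simp only [eq_intCast, Complex.norm_intCast]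
    exact_mod_cast Int.one_le_abs (Polynomial.leadingCoeff_ne_zero.mpr hg0)
  -- each root factor > 1
  have hfac : ∀ a ∈ G.roots, 1 < ‖(m : ℂ) - a‖ := by
    intro a ha
    have haroot : Polynomial.aeval a g = 0 := by
      have := Polynomial.isRoot_of_mem_roots ha
      simpa [hGdef, Polynomial.IsRoot, Polynomial.eval_map, Polynomial.aeval_def] using this
    have h1 : ‖a‖ < 1 := hroots a haroot
    have h2 : (2 : ℝ) ≤ ‖(m : ℂ)‖ := by
      rw [Complex.norm_intCast]; exact_mod_cast hm
    calc (1 : ℝ) < ‖(m:ℂ)‖ - ‖a‖ := by linarith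
    _ ≤ ‖(m:ℂ) - a‖ := by
        have htri := norm_add_le ((m:ℂ) - a) a
        simp only [sub_add_cancel] at htri
        linarith
  -- product > 1
  obtain ⟨a₀, ha₀⟩ : ∃ a, a ∈ G.roots := by
    rcases Multiset.card_pos_iff_exists_mem.mp (by omega : 0 < G.roots.card) with ⟨a, ha⟩
    exact ⟨a, ha⟩
  obtain ⟨t, ht⟩ := Multiset.exists_cons_of_mem ha₀
  have hprod : 1 < (G.roots.map fun a => ‖(m : ℂ) - a‖).prod := by
    rw [ht, Multiset.map_cons, Multiset.prod_cons]
    have h1 : 1 < ‖(m:ℂ) - a₀‖ := hfac a₀ ha₀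
    have h2 : (1:ℝ) ≤ (t.map fun a => ‖(m : ℂ) - a‖).prod := by
      apply Multiset.one_le_prod
      intro x hx
      obtain ⟨a, ha, rfl⟩ := Multiset.mem_map.mp hx
      exact le_of_lt (hfac a (by rw [ht]; exact Multiset.mem_cons_of_mem ha))
    nlinarith
  have : (1:ℝ) < ‖G.eval (m:ℂ)‖ := by
    rw [heq]; nlinarith
  rw [hevalG, Complex.norm_intCast] at this
  exact_mod_cast this

theorem stmt_2 (f : Polynomial ℤ) (hf : 0 < f.natDegree)
    (hroots : ∀ α : ℂ, Polynomial.aeval α f = 0 → ‖α‖ < 1)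
    (m : ℤ) (hm : 2 ≤ |m|) (hp : (f.eval m).natAbs.Prime) :
    Irreducible f := by
  have hf0 : f ≠ 0 := fun h => by simp [h] at hf
  constructor
  · exact Polynomial.not_isUnit_of_natDegree_pos f hf
  intro a b hab
  by_contra hcon
  push_neg at hcon
  obtain ⟨hua, hub⟩ := hcon
  have ha0 : a ≠ 0 := fun h => hf0 (by simp [hab, h])
  have hb0 : b ≠ 0 := fun h => hf0 (by simp [hab, h])
  -- any non-unit factor has |eval m| ≥ 2
  have key : ∀ c : Polynomial ℤ, c ≠ 0 → ¬IsUnit c → c ∣ f → 2 ≤ |c.eval m| := by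
    intro c hc0 huc hdvd
    rcases Nat.eq_zero_or_pos c.natDegree with hdeg | hdeg
    · -- constant
      have hc : c = Polynomial.C (c.coeff 0) := Polynomial.eq_C_of_natDegree_eq_zero hdeg
      have : ¬IsUnit (c.coeff 0) := by
        intro h; exact huc (by rw [hc]; exact h.map Polynomial.C)
      have h1 : c.coeff 0 ≠ 0 := fun h => hc0 (by rw [hc, h]; simp)
      have hne := Int.isUnit_iff.not.mp this
      push_neg at hne
      have : 2 ≤ |c.coeff 0| := by
        rcases abs_cases (c.coeff 0) with ⟨h, _⟩ | ⟨h, _⟩ <;> omega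
      calc (2:ℤ) ≤ |c.coeff 0| := this
      _ = |c.eval m| := by rw [hc]; simp
    · have hcr : ∀ α : ℂ, Polynomial.aeval α c = 0 → ‖α‖ < 1 := by
        intro α hα
        obtain ⟨d, rfl⟩ := hdvd
        apply hroots
        rw [map_mul, hα, zero_mul]
      have := key_eval_big c hdeg hcr m hm
      omega
  have h2a : 2 ≤ |a.eval m| := key a ha0 hua ⟨b, hab⟩
  have h2b : 2 ≤ |b.eval m| := key b hb0 hub ⟨a, by rw [hab]; ring⟩
  have hmul : (f.eval m).natAbs = (a.eval m).natAbs * (b.eval m).natAbs := by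
    rw [hab, Polynomial.eval_mul, Int.natAbs_mul]
  rw [Int.abs_eq_natAbs] at h2a h2b
  have h2a' : 2 ≤ (a.eval m).natAbs := by omega
  have h2b' : 2 ≤ (b.eval m).natAbs := by omega
  rcases hp.eq_one_or_self_of_dvd (a.eval m).natAbs ⟨(b.eval m).natAbs, hmul⟩ with h | h
  · omega
  · have : (b.eval m).natAbs = 1 := by
      have hpos : 0 < (a.eval m).natAbs := by omega
      have := hmul
      rw [h] at this
      nlinarith [hp.one_lt]
    omega
end

section
/- Let g ∈ ℤ[x] be a nonconstant polynomial all of whose complex zeros lie in {z ∈ ℂ : |z| > 1}. If |g(0)| is a prime number, then g is irreducible in ℤ[x]. -/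
open Polynomial

lemma one_le_msprod (s : Multiset ℝ) (h : ∀ x ∈ s, 1 ≤ x) : 1 ≤ s.prod := by
  induction s using Multiset.induction_on with
  | empty => simp
  | cons a t ih =>
    simp only [Multiset.prod_cons]
    have ha := h a (Multiset.mem_cons_self a t)
    have ht := ih (fun x hx => h x (Multiset.mem_cons_of_mem hx))
    nlinarith

lemma aux_unit (g a : Polynomial ℤ)
    (hroots : ∀ α : ℂ, Polynomial.aeval α g = 0 → 1 < ‖α‖)
    (hdvd : a ∣ g) (hg0 : g ≠ 0)
    (h1 : (a.eval 0).natAbs = 1) : IsUnit a := by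
  by_cases hd : a.natDegree = 0
  · obtain ⟨c, rfl⟩ := Polynomial.natDegree_eq_zero.mp hd
    have : c.natAbs = 1 := by simpa using h1
    have : IsUnit c := Int.isUnit_iff.mpr (Int.natAbs_eq_iff.mp this |>.imp id id)
    exact this.map Polynomial.C
  · exfalso
    have ha0 : a ≠ 0 := by
      rintro rfl
      exact hg0 (zero_dvd_iff.mp hdvd)
    set A := a.map (algebraMap ℤ ℂ) with hA
    have hA0 : A ≠ 0 := by
      rw [hA]
      exact (Polynomial.map_ne_zero_iff (algebraMap ℤ ℂ).injective_int).mpr ha0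
    have hAdeg : A.natDegree = a.natDegree := by
      simpa [hA] using Polynomial.natDegree_map_eq_of_injective
        (algebraMap ℤ ℂ).injective_int a
    -- every root of A has abs > 1
    have hrootsA : ∀ r ∈ A.roots, 1 < ‖r‖ := by
      intro r hr
      have hra : Polynomial.aeval r a = 0 := by
        have := (Polynomial.mem_roots hA0).mp hr
        simpa [hA, Polynomial.IsRoot, Polynomial.eval_map, Polynomial.aeval_def] using this
      obtain ⟨b, rfl⟩ := hdvd
      apply hroots
      simp [hra]
    -- product formula
    have hsplit := (IsAlgClosed.splits A).eq_prod_roots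
    have heval : A.eval 0 = A.leadingCoeff * (A.roots.map fun r => -r).prod := by
      conv_lhs => rw [hsplit]
      simp [Polynomial.eval_multiset_prod, Multiset.map_map, Function.comp]
    have habs : ‖A.eval 0‖
        = ‖A.leadingCoeff‖ * (A.roots.map fun r => ‖r‖).prod := by
      rw [heval, norm_mul]
      congr 1
      have := map_multiset_prod (normHom : ℂ →*₀ ℝ) (A.roots.map fun r => -r)
      simpa [Multiset.map_map, Function.comp] using this
    -- LHS = 1
    have hA0eval : A.eval 0 = ((a.eval 0 : ℤ) : ℂ) := by
      simp [hA, Polynomial.eval_map, Polynomial.eval₂_at_zero,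
        Polynomial.coeff_zero_eq_eval_zero]
    have hlhs : ‖A.eval 0‖ = 1 := by
      rw [hA0eval, Complex.norm_intCast]
      have h2 : |a.eval 0| = 1 := by rw [Int.abs_eq_natAbs, h1]; rfl
      exact_mod_cast h2
    -- leading coeff abs ≥ 1
    have hlead : (1 : ℝ) ≤ ‖A.leadingCoeff‖ := by
      have : A.leadingCoeff = ((a.leadingCoeff : ℤ) : ℂ) := by
        rw [hA]
        exact Polynomial.leadingCoeff_map_of_injective (algebraMap ℤ ℂ).injective_int a
      rw [this, Complex.norm_intCast]
      have : a.leadingCoeff ≠ 0 := Polynomial.leadingCoeff_ne_zero.mpr ha0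
      exact_mod_cast Int.one_le_abs (by exact_mod_cast this)
    -- product of roots' abs > 1
    have hdegpos : 0 < A.natDegree := hAdeg ▸ Nat.pos_of_ne_zero hd
    obtain ⟨r, hr⟩ := Complex.exists_root
      (Polynomial.natDegree_pos_iff_degree_pos.mp hdegpos)
    have hrmem : r ∈ A.roots := (Polynomial.mem_roots hA0).mpr hr
    have hprod : (1 : ℝ) < (A.roots.map fun r => ‖r‖).prod := by
      obtain ⟨t, ht⟩ := Multiset.exists_cons_of_mem hrmem
      rw [ht, Multiset.map_cons, Multiset.prod_cons]
      have h1r : 1 < ‖r‖ := hrootsA r hrmem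
      have htp : 1 ≤ (t.map fun r => ‖r‖).prod := by
        apply one_le_msprod
        intro x hx
        obtain ⟨s, hs, rfl⟩ := Multiset.mem_map.mp hx
        exact le_of_lt (hrootsA s (ht ▸ Multiset.mem_cons_of_mem hs))
      nlinarith
    have hprodpos : (0 : ℝ) < (A.roots.map fun r => ‖r‖).prod :=
      lt_trans one_pos hprod
    nlinarith [habs, hlhs, hlead, hprod, hprodpos]

theorem stmt_3 (g : Polynomial ℤ) (hg : 0 < g.natDegree)
    (hroots : ∀ α : ℂ, Polynomial.aeval α g = 0 → 1 < ‖α‖)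
    (hp : (g.eval 0).natAbs.Prime) :
    Irreducible g := by
  have hg0 : g ≠ 0 := fun h => by simp [h] at hg
  constructor
  · exact Polynomial.not_isUnit_of_natDegree_pos g hg
  · intro a b hab
    have heval : (g.eval 0).natAbs = (a.eval 0).natAbs * (b.eval 0).natAbs := by
      rw [hab]; simp [Int.natAbs_mul]
    have := (Nat.Prime.eq_one_or_self_of_dvd hp (a.eval 0).natAbs
      ⟨(b.eval 0).natAbs, heval⟩)
    rcases this with h | h
    · left
      exact aux_unit g a hroots ⟨b, hab⟩ hg0 h
    · right
      have hb1 : (b.eval 0).natAbs = 1 := by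
        have h2 : (g.eval 0).natAbs * 1 = (g.eval 0).natAbs * (b.eval 0).natAbs := by
          rw [mul_one]
          conv_lhs => rw [heval, h]
        exact (Nat.eq_of_mul_eq_mul_left hp.pos h2).symm
      exact aux_unit g b hroots ⟨a, by rw [hab, mul_comm]⟩ hg0 hb1
end

section
/- Let f(x) = a_n x^n + ... + a_0 ∈ ℤ[x] with a_0 ≠ 0 and |a_n| > |a_{n-1}| + ... + |a_0|. If |a_n| is a prime number, then f is irreducible in ℤ[x]. -/
open Polynomial Finset

private lemma prod_abs_lt_one {s : Multiset ℂ} (hs : s ≠ 0)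
    (h : ∀ r ∈ s, ‖r‖ < 1) : (s.map (‖·‖)).prod < 1 := by
  induction s using Multiset.induction with
  | empty => simp at hs
  | cons r t ih =>
    simp only [Multiset.map_cons, Multiset.prod_cons]
    have hr := h r (Multiset.mem_cons_self r t)
    have ht1 : (t.map (‖·‖)).prod ≤ 1 := by
      rcases eq_or_ne t 0 with rfl | ht0
      · simp
      · exact le_of_lt (ih ht0 (fun x hx => h x (Multiset.mem_cons_of_mem hx)))
    have ht0 : 0 ≤ (t.map (‖·‖)).prod := by
      apply Multiset.prod_nonneg
      intro x hx
      simp only [Multiset.mem_map] at hx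
      obtain ⟨y, _, rfl⟩ := hx
      exact norm_nonneg y
    calc ‖r‖ * (t.map (‖·‖)).prod
        ≤ ‖r‖ * 1 := mul_le_mul_of_nonneg_left ht1 (norm_nonneg r)
      _ < 1 := by simpa using hr

private lemma root_small (n : ℕ) (a : ℕ → ℤ)
    (hdom : ∑ i ∈ Finset.range n, |a i| < |a n|) (z : ℂ)
    (hz : ∑ i ∈ Finset.range (n+1), (a i : ℂ) * z ^ i = 0) : ‖z‖ < 1 := by
  by_contra hc
  push_neg at hc
  have hzn : (1:ℝ) ≤ ‖z‖ ^ n := one_le_pow₀ hc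
  have hzn' : (0:ℝ) < ‖z‖ ^ n := lt_of_lt_of_le one_pos hzn
  have hm : (a n : ℂ) * z ^ n = -∑ i ∈ Finset.range n, (a i:ℂ) * z ^ i := by
    rw [Finset.sum_range_succ] at hz
    linear_combination hz
  have habs : (|a n| : ℝ) * ‖z‖ ^ n
      ≤ (∑ i ∈ Finset.range n, (|a i| : ℝ)) * ‖z‖ ^ n := by
    have h1 : ‖(a n : ℂ) * z ^ n‖ = (|a n| : ℝ) * ‖z‖ ^ n := by
      simp [norm_mul, norm_pow, Complex.norm_intCast]
    have h2 : ‖(a n : ℂ) * z ^ n‖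
        ≤ ∑ i ∈ Finset.range n, (|a i| : ℝ) * ‖z‖ ^ i := by
      rw [hm, norm_neg]
      refine le_trans (norm_sum_le _ _) ?_
      apply Finset.sum_le_sum
      intro i _
      simp [norm_mul, norm_pow, Complex.norm_intCast]
    have h3 : ∑ i ∈ Finset.range n, (|a i| : ℝ) * ‖z‖ ^ i
        ≤ ∑ i ∈ Finset.range n, (|a i| : ℝ) * ‖z‖ ^ n := by
      apply Finset.sum_le_sum
      intro i hi
      apply mul_le_mul_of_nonneg_left _ (by positivity)
      exact pow_le_pow_right₀ hc (le_of_lt (Finset.mem_range.mp hi))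
    rw [← h1]
    rw [Finset.sum_mul]
    exact le_trans h2 h3
  have : (|a n| : ℝ) ≤ ∑ i ∈ Finset.range n, (|a i| : ℝ) :=
    le_of_mul_le_mul_right habs hzn'
  have hd : (∑ i ∈ Finset.range n, (|a i| : ℝ)) < (|a n| : ℝ) := by
    exact_mod_cast hdom
  linarith

private lemma no_small_lead_factor (n : ℕ) (a : ℕ → ℤ) (h0 : a 0 ≠ 0)
    (hdom : ∑ i ∈ Finset.range n, |a i| < |a n|) (g : ℤ[X])
    (hg : g ∣ (∑ i ∈ Finset.range (n + 1), C (a i) * X ^ i))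
    (hdeg : 1 ≤ g.natDegree) (hlead : g.leadingCoeff.natAbs = 1) : False := by
  set f : ℤ[X] := ∑ i ∈ Finset.range (n + 1), C (a i) * X ^ i with hf
  have hfe : f.eval 0 = a 0 := by
    rw [hf, Polynomial.eval_finset_sum]
    rw [Finset.sum_eq_single 0]
    · simp
    · intro i _ hi; simp [zero_pow hi]
    · intro h; exact absurd (Finset.mem_range.mpr (Nat.succ_pos n)) h
  have hg0 : g.eval 0 ≠ 0 := by
    intro h
    obtain ⟨q, hq⟩ := hg
    have h2 : f.eval 0 = g.eval 0 * q.eval 0 := by rw [hq, Polynomial.eval_mul]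
    rw [hfe, h, zero_mul] at h2
    exact h0 h2
  have hg0' : (1:ℝ) ≤ |((g.eval (0:ℤ) : ℤ) : ℝ)| := by
    have : 1 ≤ |g.eval 0| := Int.one_le_abs (by exact hg0)
    exact_mod_cast this
  have hgne : g ≠ 0 := fun h => by simp [h] at hlead
  set G : ℂ[X] := g.map (Int.castRingHom ℂ) with hG
  have hGne : G ≠ 0 := by
    rw [hG]
    exact (Polynomial.map_ne_zero_iff (RingHom.injective_int _)).mpr hgne
  have hsplits : G.Splits := IsAlgClosed.splits G
  have hGdeg : G.natDegree = g.natDegree :=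
    Polynomial.natDegree_map_eq_of_injective (RingHom.injective_int _) g
  have hcard : G.roots.card = G.natDegree := (Polynomial.splits_iff_card_roots).mp hsplits
  have hroots_ne : G.roots ≠ 0 := by
    intro h
    rw [h] at hcard
    simp at hcard
    omega
  -- every root of G has abs < 1
  have hroot : ∀ r ∈ G.roots, ‖r‖ < 1 := by
    intro r hr
    have hGr : G.eval r = 0 := (Polynomial.isRoot_of_mem_roots hr)
    have hGF : G ∣ f.map (Int.castRingHom ℂ) := Polynomial.map_dvd _ hg
    have hFr : (f.map (Int.castRingHom ℂ)).eval r = 0 := by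
      obtain ⟨q, hq⟩ := hGF
      rw [hq, Polynomial.eval_mul, hGr, zero_mul]
    have hFr' : ∑ i ∈ Finset.range (n+1), (a i : ℂ) * r ^ i = 0 := by
      rw [hf] at hFr
      simpa [Polynomial.map_sum, Polynomial.map_mul, Polynomial.map_pow, Polynomial.map_C, Polynomial.map_X, Polynomial.eval_finset_sum] using hFr
    exact root_small n a hdom r hFr'
  -- G factors into roots
  have hfact := hsplits.eq_prod_roots
  have heval := congrArg (Polynomial.eval 0) hfact
  rw [Polynomial.eval_mul, Polynomial.eval_C, Polynomial.eval_multiset_prod] at heval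
  have habs := congrArg (‖·‖) heval
  rw [norm_mul] at habs
  have hleadG : ‖G.leadingCoeff‖ = 1 := by
    have : G.leadingCoeff = (g.leadingCoeff : ℂ) :=
      Polynomial.leadingCoeff_map_of_leadingCoeff_ne_zero _ (by
        simpa using (Polynomial.leadingCoeff_ne_zero.mpr hgne))
    rw [this, Complex.norm_intCast, ← Int.cast_abs]
    norm_cast
    rw [Int.abs_eq_natAbs, hlead]
    rfl
  have hprodabs : ‖((G.roots.map fun a => X - C a).map (Polynomial.eval 0)).prod‖
      = ((G.roots.map (‖·‖))).prod := by
    rw [show ∀ m : Multiset ℂ, ‖m.prod‖ = (m.map (‖·‖)).prod from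
      fun m => map_multiset_prod (normHom (α := ℂ)) m]
    congr 1
    rw [Multiset.map_map, Multiset.map_map]
    apply Multiset.map_congr rfl
    intro r _
    simp
  rw [hleadG, one_mul, hprodabs] at habs
  have hlt : ((G.roots.map (‖·‖))).prod < 1 := prod_abs_lt_one hroots_ne hroot
  have hGe0 : ‖G.eval 0‖ = |((g.eval (0:ℤ) : ℤ) : ℝ)| := by
    have heq : G.eval 0 = ((g.eval 0 : ℤ) : ℂ) := by
      rw [hG, Polynomial.eval_map, Polynomial.eval₂_at_zero]
      simp [Polynomial.coeff_zero_eq_eval_zero]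
    rw [heq, Complex.norm_intCast]
  rw [hGe0] at habs
  rw [habs] at hg0'
  linarith

theorem stmt_5 (n : ℕ) (a : ℕ → ℤ) (hn : 1 ≤ n) (h0 : a 0 ≠ 0)
    (hdom : ∑ i ∈ Finset.range n, |a i| < |a n|)
    (hp : (a n).natAbs.Prime) :
    Irreducible (∑ i ∈ Finset.range (n + 1), Polynomial.C (a i) * Polynomial.X ^ i) := by
  set f : ℤ[X] := ∑ i ∈ Finset.range (n + 1), C (a i) * X ^ i with hf
  have han : a n ≠ 0 := by
    intro h; rw [h] at hp; simp at hp; exact Nat.not_prime_zero hp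
  have hcoeff : f.coeff n = a n := by
    rw [hf, Polynomial.finset_sum_coeff]
    rw [Finset.sum_eq_single n]
    · simp
    · intro i _ hi; simp [Polynomial.coeff_C_mul, Polynomial.coeff_X_pow, hi,
        (Ne.symm hi)]
    · intro h; exact absurd (Finset.mem_range.mpr (Nat.lt_succ_self n)) h
  have hfdeg : f.natDegree = n := by
    apply le_antisymm
    · apply Polynomial.natDegree_sum_le_of_forall_le
      intro i hi
      refine le_trans (Polynomial.natDegree_C_mul_le _ _) ?_
      simpa [Polynomial.natDegree_X_pow] using Nat.lt_succ_iff.mp (Finset.mem_range.mp hi)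
    · exact Polynomial.le_natDegree_of_ne_zero (by rw [hcoeff]; exact han)
  have hflead : f.leadingCoeff = a n := by
    rw [Polynomial.leadingCoeff, hfdeg, hcoeff]
  have hfne : f ≠ 0 := fun h => han (by rw [← hflead, h]; simp)
  constructor
  · intro hu
    have := Polynomial.natDegree_eq_zero_of_isUnit hu
    omega
  · intro g h hgh
    have hlead : g.leadingCoeff * h.leadingCoeff = a n := by
      rw [← hflead, hgh, Polynomial.leadingCoeff_mul]
    have hnat : g.leadingCoeff.natAbs * h.leadingCoeff.natAbs = (a n).natAbs := by
      rw [← Int.natAbs_mul, hlead]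
    have hunit : ∀ q q' : ℤ[X], q * q' = f → q.leadingCoeff.natAbs = 1 → IsUnit q := by
      intro q q' hq hq1
      have hqdvd : q ∣ f := ⟨q', hq.symm⟩
      have hqdeg : q.natDegree = 0 := by
        by_contra hd
        exact no_small_lead_factor n a h0 hdom q hqdvd (by omega) hq1
      have hqC : q = C (q.coeff 0) := Polynomial.eq_C_of_natDegree_eq_zero hqdeg
      rw [hqC]
      rw [Polynomial.isUnit_C]
      apply Int.isUnit_iff_natAbs_eq.mpr
      have : q.leadingCoeff = q.coeff 0 := by rw [Polynomial.leadingCoeff, hqdeg]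
      rw [← this]; exact hq1
    rcases hp.eq_one_or_self_of_dvd g.leadingCoeff.natAbs ⟨h.leadingCoeff.natAbs, hnat.symm⟩
      with h1 | h1
    · exact Or.inl (hunit g h hgh.symm h1)
    · right
      have h2 : h.leadingCoeff.natAbs = 1 := by
        rw [h1] at hnat
        have hpne : (a n).natAbs ≠ 0 := hp.ne_zero
        have := hnat
        nlinarith [Nat.one_le_iff_ne_zero.mpr hpne]
      exact hunit h g (by rw [mul_comm]; exact hgh.symm) h2
end

section
/- Let f(x) = a_n x^n + ... + a_0 ∈ ℤ[x] satisfy 0 < a_0 ≤ a_1 ≤ ... ≤ a_{k-1} < a_k < a_{k+1} ≤ ... ≤ a_n for some k with 0 ≤ k ≤ n-1. If a_n is a prime number, then f is irreducible in ℤ[x]. -/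
open Polynomial Finset

lemma re_pow_eq_one {u : ℂ} (hu : ‖u‖ = 1) (h : u.re = 1) : u = 1 := by
  have h2 : u.re * u.re + u.im * u.im = 1 := by
    have h := Complex.sq_norm u
    rw [hu] at h
    simp [Complex.normSq_apply] at h
    linarith
  have him : u.im = 0 := by nlinarith
  exact Complex.ext (by simp [h]) (by simp [him])

lemma prod_le_one_aux (s : Multiset ℝ) (h : ∀ x ∈ s, 0 ≤ x ∧ x < 1) : s.prod ≤ 1 := by
  induction s using Multiset.induction_on with
  | empty => simp
  | cons b t ih =>
    simp only [Multiset.prod_cons]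
    have hb := h b (Multiset.mem_cons_self b t)
    have ih' := ih (fun x hx => h x (Multiset.mem_cons_of_mem hx))
    have ht : (0:ℝ) ≤ t.prod := Multiset.prod_nonneg (fun x hx => (h x (Multiset.mem_cons_of_mem hx)).1)
    nlinarith

lemma key_root (n k : ℕ) (a : ℕ → ℤ) (hn : 1 ≤ n) (hk : k ≤ n - 1) (h0 : 0 < a 0)
    (hmono : ∀ i, i < n → a i ≤ a (i + 1))
    (hstrict1 : 0 < k → a (k - 1) < a k)
    (hstrict2 : a k < a (k + 1))
    (z : ℂ) (hz : ∑ i ∈ Finset.range (n + 1), (a i : ℂ) * z ^ i = 0) :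
    ‖z‖ < 1 := by
  have hle : ∀ i j, i ≤ j → j ≤ n → a i ≤ a j := by
    intro i j hij hjn
    induction j with
    | zero => have : i = 0 := by omega
              simp [this]
    | succ m ih =>
      rcases Nat.eq_or_lt_of_le hij with h | h
      · simp [h]
      · exact le_trans (ih (by omega) (by omega)) (hmono m (by omega))
  have hpos : ∀ i, i ≤ n → 0 < a i := fun i hi => lt_of_lt_of_le h0 (hle 0 i (Nat.zero_le _) hi)
  by_contra hcon
  push_neg at hcon
  set r : ℝ := ‖z‖ with hr
  have key1 : (a 0 : ℂ) + ∑ i ∈ range n, ((a (i+1) : ℂ) - a i) * z ^ (i+1)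
      = (a n : ℂ) * z ^ (n+1) := by
    have e1 := Finset.sum_range_succ' (fun i => (a i : ℂ) * z ^ i) n
    have e2 := Finset.sum_range_succ (fun i => (a i : ℂ) * z ^ i) n
    rw [hz] at e1 e2
    have e3 : ∑ i ∈ range n, ((a (i+1) : ℂ) - a i) * z ^ (i+1)
        = ∑ i ∈ range n, (a (i+1) : ℂ) * z ^ (i+1) - z * ∑ i ∈ range n, (a i : ℂ) * z ^ i := by
      rw [Finset.mul_sum, ← Finset.sum_sub_distrib]
      exact Finset.sum_congr rfl (fun i _ => by ring)
    linear_combination e3 - e1 + z * e2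
  have hrn : (0:ℝ) < r := lt_of_lt_of_le one_pos hcon
  have hb1 : (a n : ℝ) * r ^ (n+1) ≤ (a n : ℝ) * r ^ n := by
    have habs : ‖(a n : ℂ) * z ^ (n+1)‖ = (a n : ℝ) * r ^ (n+1) := by
      rw [norm_mul, norm_pow, Complex.norm_intCast]
      rw [abs_of_pos (by exact_mod_cast hpos n le_rfl)]
    rw [← habs, ← key1]
    calc ‖(a 0 : ℂ) + ∑ i ∈ range n, ((a (i+1) : ℂ) - a i) * z ^ (i+1)‖
        ≤ ‖(a 0 : ℂ)‖ + ∑ i ∈ range n, ‖((a (i+1) : ℂ) - a i) * z ^ (i+1)‖ :=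
          le_trans (norm_add_le _ _) (by gcongr; exact norm_sum_le _ _)
      _ ≤ (a 0 : ℝ) * r ^ n + ∑ i ∈ range n, ((a (i+1) : ℝ) - a i) * r ^ n := by
          apply add_le_add
          · rw [Complex.norm_intCast, abs_of_pos (by exact_mod_cast h0)]
            have h4 : (0:ℝ) < (a 0 : ℝ) := by exact_mod_cast h0
            nlinarith [one_le_pow₀ hcon (n := n)]
          · apply Finset.sum_le_sum
            intro i hi
            rw [norm_mul, norm_pow]
            have h1 : ‖((a (i+1) : ℂ) - a i)‖ = (a (i+1) : ℝ) - a i := by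
              rw [show ((a (i+1) : ℂ) - a i) = (((a (i+1) - a i : ℤ) : ℝ) : ℂ) by push_cast; ring,
                Complex.norm_real, Real.norm_eq_abs, abs_of_nonneg (by exact_mod_cast sub_nonneg.mpr (hmono i (Finset.mem_range.mp hi)))]
              push_cast
              ring
            rw [h1]
            have h2 : r ^ (i+1) ≤ r ^ n :=
              pow_le_pow_right₀ hcon (by have := Finset.mem_range.mp hi; omega)
            have h3 : (0:ℝ) ≤ (a (i+1) : ℝ) - a i := by
              exact_mod_cast sub_nonneg.mpr (hmono i (Finset.mem_range.mp hi))
            exact mul_le_mul_of_nonneg_left h2 h3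
      _ = (a n : ℝ) * r ^ n := by
          rw [← Finset.sum_mul, Finset.sum_range_sub (fun i => (a i : ℝ))]
          ring
  have hr1 : r = 1 := by
    have han : (0:ℝ) < (a n : ℝ) := by exact_mod_cast hpos n le_rfl
    have hrpow : (0:ℝ) < r ^ n := pow_pos hrn n
    have : r ≤ 1 := by nlinarith [hb1, pow_succ r n, mul_pos han hrpow]
    linarith [hcon]
  set w : ℂ := (starRingEnd ℂ) z with hw
  have hzw : z * w = 1 := by
    have hns : Complex.normSq z = 1 := by
      rw [Complex.normSq_eq_norm_sq, ← hr, hr1]; norm_num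
    rw [hw, Complex.mul_conj, hns, Complex.ofReal_one]
  have habsw : ‖w‖ = 1 := by rw [hw, Complex.norm_conj, ← hr, hr1]
  have E' : (a n : ℂ) = (a 0 : ℂ) * w ^ (n+1)
      + ∑ i ∈ range n, ((a (i+1) : ℂ) - a i) * w ^ (n - i) := by
    calc (a n : ℂ) = (a n : ℂ) * ((z * w) ^ (n+1)) := by rw [hzw]; ring
      _ = ((a n : ℂ) * z ^ (n+1)) * w ^ (n+1) := by rw [mul_pow]; ring
      _ = ((a 0 : ℂ) + ∑ i ∈ range n, ((a (i+1) : ℂ) - a i) * z ^ (i+1)) * w ^ (n+1) := by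
          rw [key1]
      _ = (a 0 : ℂ) * w ^ (n+1) + ∑ i ∈ range n, ((a (i+1) : ℂ) - a i) * (z ^ (i+1) * w ^ (n+1)) := by
          rw [add_mul, Finset.sum_mul]
          congr 1
          exact Finset.sum_congr rfl (fun i _ => by ring)
      _ = (a 0 : ℂ) * w ^ (n+1) + ∑ i ∈ range n, ((a (i+1) : ℂ) - a i) * w ^ (n - i) := by
          congr 1
          refine Finset.sum_congr rfl (fun i hi => ?_)
          have hi' := Finset.mem_range.mp hi
          have h5 : z ^ (i+1) * w ^ (n+1) = (z * w) ^ (i+1) * w ^ (n - i) := by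
            rw [mul_pow, mul_assoc, ← pow_add, show i + 1 + (n - i) = n + 1 by omega]
          rw [h5, hzw, one_pow, one_mul]
  have hre : (a n : ℝ) = (a 0 : ℝ) * (w ^ (n+1)).re
      + ∑ i ∈ range n, ((a (i+1) : ℝ) - a i) * (w ^ (n - i)).re := by
    have := congrArg Complex.re E'
    simpa [Complex.add_re, Complex.re_sum, Complex.mul_re,
      Complex.intCast_re, Complex.intCast_im, Complex.sub_re, Complex.sub_im] using this
  have hreb : ∀ m : ℕ, (w ^ m).re ≤ 1 := by
    intro m
    calc (w ^ m).re ≤ ‖w ^ m‖ := Complex.re_le_norm _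
      _ = 1 := by rw [norm_pow, habsw, one_pow]
  have htel : (a n : ℝ) = (a 0 : ℝ) + ∑ i ∈ range n, ((a (i+1) : ℝ) - a i) := by
    rw [Finset.sum_range_sub (fun i => (a i : ℝ))]; ring
  have hsum0 : (a 0 : ℝ) * (1 - (w ^ (n+1)).re)
      + ∑ i ∈ range n, ((a (i+1) : ℝ) - a i) * (1 - (w ^ (n - i)).re) = 0 := by
    have : ∑ i ∈ range n, ((a (i+1) : ℝ) - a i) * (1 - (w ^ (n - i)).re)
        = ∑ i ∈ range n, ((a (i+1) : ℝ) - a i) - ∑ i ∈ range n, ((a (i+1) : ℝ) - a i) * (w ^ (n - i)).re := by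
      rw [← Finset.sum_sub_distrib]
      exact Finset.sum_congr rfl (fun i _ => by ring)
    rw [this]
    linarith [hre, htel]
  have hterm_nonneg : ∀ i ∈ range n, (0:ℝ) ≤ ((a (i+1) : ℝ) - a i) * (1 - (w ^ (n - i)).re) := by
    intro i hi
    have h3 : (0:ℝ) ≤ (a (i+1) : ℝ) - a i := by
      exact_mod_cast sub_nonneg.mpr (hmono i (Finset.mem_range.mp hi))
    exact mul_nonneg h3 (by linarith [hreb (n - i)])
  have h0term : (0:ℝ) ≤ (a 0 : ℝ) * (1 - (w ^ (n+1)).re) := by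
    have : (0:ℝ) ≤ (a 0 : ℝ) := by exact_mod_cast h0.le
    exact mul_nonneg this (by linarith [hreb (n+1)])
  have hsumnn : (0:ℝ) ≤ ∑ i ∈ range n, ((a (i+1) : ℝ) - a i) * (1 - (w ^ (n - i)).re) :=
    Finset.sum_nonneg hterm_nonneg
  have h0eq : (a 0 : ℝ) * (1 - (w ^ (n+1)).re) = 0 := by linarith
  have hsumeq : ∑ i ∈ range n, ((a (i+1) : ℝ) - a i) * (1 - (w ^ (n - i)).re) = 0 := by linarith
  have heach := (Finset.sum_eq_zero_iff_of_nonneg hterm_nonneg).mp hsumeq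
  have hwn1 : w ^ (n+1) = 1 := by
    have ha0 : (0:ℝ) < (a 0 : ℝ) := by exact_mod_cast h0
    have : 1 - (w ^ (n+1)).re = 0 := by
      rcases mul_eq_zero.mp h0eq with h | h
      · linarith
      · exact h
    exact re_pow_eq_one (by rw [norm_pow, habsw, one_pow]) (by linarith)
  have hwk : ∀ i ∈ range n, a i < a (i+1) → w ^ (n - i) = 1 := by
    intro i hi hlt
    have := heach i hi
    have h3 : (0:ℝ) < (a (i+1) : ℝ) - a i := by exact_mod_cast sub_pos.mpr hlt
    have : 1 - (w ^ (n - i)).re = 0 := by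
      rcases mul_eq_zero.mp this with h | h
      · linarith
      · exact h
    exact re_pow_eq_one (by rw [norm_pow, habsw, one_pow]) (by linarith)
  have hkmem : k ∈ range n := Finset.mem_range.mpr (by omega)
  have hwnk : w ^ (n - k) = 1 := hwk k hkmem hstrict2
  have hw1 : w = 1 := by
    rcases Nat.eq_zero_or_pos k with hk0 | hk0
    · subst hk0
      have hn0 : w ^ n = 1 := by simpa using hwnk
      calc w = w ^ (n+1) * (w ^ n)⁻¹ := by
              rw [pow_succ, hn0]; field_simp
        _ = 1 := by rw [hwn1, hn0]; simp
    · have hk1mem : k - 1 ∈ range n := Finset.mem_range.mpr (by omega)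
      have hlt : a (k-1) < a (k-1+1) := by
        rw [show k - 1 + 1 = k by omega]; exact hstrict1 hk0
      have hwnk1 : w ^ (n - (k-1)) = 1 := hwk (k-1) hk1mem hlt
      have hsplit : n - (k-1) = (n - k) + 1 := by omega
      rw [hsplit, pow_succ, hwnk, one_mul] at hwnk1
      exact hwnk1
  have hz1 : z = 1 := by
    have h6 := hzw
    rw [hw1, mul_one] at h6
    exact h6
  rw [hz1] at hz
  simp only [one_pow, mul_one] at hz
  have h7 : ((∑ i ∈ range (n+1), a i : ℤ) : ℂ) = 0 := by push_cast; exact hz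
  have hzsum : ∑ i ∈ range (n+1), a i = 0 := by exact_mod_cast h7
  have : (0:ℤ) < ∑ i ∈ range (n+1), a i :=
    Finset.sum_pos (fun i hi => hpos i (by have := Finset.mem_range.mp hi; omega))
      ⟨0, Finset.mem_range.mpr (by omega)⟩
  omega

theorem stmt_7 (n k : ℕ) (a : ℕ → ℤ) (hn : 1 ≤ n) (hk : k ≤ n - 1)
    (h0 : 0 < a 0)
    (hmono : ∀ i, i < n → a i ≤ a (i + 1))
    (hstrict1 : 0 < k → a (k - 1) < a k)
    (hstrict2 : a k < a (k + 1))
    (hp : (a n).natAbs.Prime) :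
    Irreducible (∑ i ∈ Finset.range (n + 1), Polynomial.C (a i) * Polynomial.X ^ i) := by
  set F : ℤ[X] := ∑ i ∈ Finset.range (n + 1), Polynomial.C (a i) * Polynomial.X ^ i with hF
  have hle : ∀ i j, i ≤ j → j ≤ n → a i ≤ a j := by
    intro i j hij hjn
    induction j with
    | zero => have : i = 0 := by omega
              simp [this]
    | succ m ih =>
      rcases Nat.eq_or_lt_of_le hij with h | h
      · simp [h]
      · exact le_trans (ih (by omega) (by omega)) (hmono m (by omega))
  have hpos : ∀ i, i ≤ n → 0 < a i := fun i hi => lt_of_lt_of_le h0 (hle 0 i (Nat.zero_le _) hi)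
  have ha0n : a 0 < a n :=
    lt_of_le_of_lt (hle 0 k (Nat.zero_le _) (by omega))
      (lt_of_lt_of_le hstrict2 (hle (k+1) n (by omega) le_rfl))
  have hanpos : 0 < a n := hpos n le_rfl
  have hcoefftop : F.coeff n = a n := by
    rw [hF, Polynomial.finset_sum_coeff]
    simp [Polynomial.coeff_C_mul, Polynomial.coeff_X_pow]
  have hcoeff0 : F.coeff 0 = a 0 := by
    rw [hF, Polynomial.finset_sum_coeff]
    simp [Polynomial.coeff_C_mul, Polynomial.coeff_X_pow]
  have hFdeg : F.natDegree = n := by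
    apply le_antisymm
    · apply Polynomial.natDegree_sum_le_of_forall_le
      intro i hi
      exact le_trans (Polynomial.natDegree_C_mul_X_pow_le _ _)
        (by have := Finset.mem_range.mp hi; omega)
    · apply Polynomial.le_natDegree_of_ne_zero
      rw [hcoefftop]
      exact hanpos.ne'
  have hFne : F ≠ 0 := fun h => by rw [h] at hcoefftop; simp at hcoefftop; omega
  have hlead : F.leadingCoeff = a n := by
    rw [Polynomial.leadingCoeff, hFdeg, hcoefftop]
  have hroot : ∀ z : ℂ, (F.map (Int.castRingHom ℂ)).eval z = 0 → ‖z‖ < 1 := by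
    intro z hzz
    apply key_root n k a hn hk h0 hmono hstrict1 hstrict2 z
    have h1 : Polynomial.aeval z F = ∑ i ∈ range (n+1), (a i : ℂ) * z ^ i := by
      rw [hF, map_sum]
      simp
    rw [← h1, Polynomial.aeval_def, ← Polynomial.eval_map]
    exact hzz
  -- constant divisor lemma
  have hconst : ∀ c : ℤ, c ∣ a 0 → c ∣ a n → IsUnit c := by
    intro c hc0 hcn
    by_contra hcu
    have h1 : c.natAbs ∣ (a n).natAbs := Int.natAbs_dvd_natAbs.mpr hcn
    rcases hp.eq_one_or_self_of_dvd _ h1 with h | h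
    · exact hcu (Int.isUnit_iff_natAbs_eq.mpr h)
    · have h2 : (a n).natAbs ∣ (a 0).natAbs := h ▸ Int.natAbs_dvd_natAbs.mpr hc0
      have h3 : (a n).natAbs ≤ (a 0).natAbs :=
        Nat.le_of_dvd (Int.natAbs_pos.mpr h0.ne') h2
      omega
  -- nonconstant factor with unit leading coeff: contradiction
  have hbig : ∀ q u : ℤ[X], F = q * u → 1 ≤ q.natDegree → q.leadingCoeff.natAbs = 1 → False := by
    intro q u hqu hdq hlq
    have hlqne : q.leadingCoeff ≠ 0 := fun h => by simp [h] at hlq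
    have hqne : q ≠ 0 := fun h => hlqne (by simp [h])
    set Q : ℂ[X] := q.map (Int.castRingHom ℂ) with hQ
    have hinj : Function.Injective (Int.castRingHom ℂ) := fun x y hxy => by
      simp only [eq_intCast] at hxy
      exact_mod_cast hxy
    have hQlead : Q.leadingCoeff = (q.leadingCoeff : ℂ) := by
      apply Polynomial.leadingCoeff_map_of_leadingCoeff_ne_zero
      simpa using hlqne
    have hQdeg : Q.natDegree = q.natDegree := q.natDegree_map_eq_of_injective hinj
    have hsp : Q.Splits := IsAlgClosed.splits Q
    have hcard : Q.roots.card = Q.natDegree := (Polynomial.splits_iff_card_roots).mp hsp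
    have hfac := hsp.eq_prod_roots
    have hroots : ∀ z ∈ Q.roots, ‖z‖ < 1 := by
      intro z hzr
      apply hroot
      have h1 : Q.eval z = 0 := (Polynomial.mem_roots'.mp hzr).2
      rw [hqu, Polynomial.map_mul, Polynomial.eval_mul, ← hQ, h1, zero_mul]
    have hq0 : Q.eval 0 = ((q.coeff 0 : ℤ) : ℂ) := by
      rw [hQ, Polynomial.eval_map, Polynomial.eval₂_at_zero]
      rfl
    have hq0ne : q.coeff 0 ≠ 0 := by
      intro h
      have h1 : F.coeff 0 = q.coeff 0 * u.coeff 0 := by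
        rw [hqu, Polynomial.mul_coeff_zero]
      rw [hcoeff0, h, zero_mul] at h1
      omega
    have habs : ‖Q.eval 0‖ = (Q.roots.map (fun x => ‖x‖)).prod := by
      conv_lhs => rw [hfac]
      rw [Polynomial.eval_mul, Polynomial.eval_C, Polynomial.eval_multiset_prod, norm_mul,
        (fun s => by exact map_multiset_prod (normHom (α := ℂ)) s : ∀ s : Multiset ℂ, ‖s.prod‖ = (s.map (fun x => ‖x‖)).prod), Multiset.map_map, Multiset.map_map]
      have hl1 : ‖Q.leadingCoeff‖ = 1 := by
        rw [hQlead, Complex.norm_intCast]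
        have h2 : |q.leadingCoeff| = 1 := by
          rw [Int.abs_eq_natAbs, hlq]; rfl
        exact_mod_cast h2
      rw [hl1, one_mul]
      congr 1
      apply Multiset.map_congr rfl
      intro x hx
      simp
    have h1le : (1:ℝ) ≤ ‖Q.eval 0‖ := by
      rw [hq0, Complex.norm_intCast]
      have : (1:ℤ) ≤ |q.coeff 0| := Int.one_le_abs hq0ne
      exact_mod_cast this
    have hne0 : Q.roots ≠ 0 := by
      intro h
      rw [h] at hcard
      simp at hcard
      omega
    obtain ⟨z0, hz0⟩ := Multiset.exists_mem_of_ne_zero hne0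
    obtain ⟨t, ht⟩ := Multiset.exists_cons_of_mem hz0
    have hlt1 : (Q.roots.map (fun x => ‖x‖)).prod < 1 := by
      rw [ht, Multiset.map_cons, Multiset.prod_cons]
      have hz0lt := hroots z0 hz0
      have hz0nn : (0:ℝ) ≤ ‖z0‖ := norm_nonneg z0
      have htle : ((t.map (fun x => ‖x‖))).prod ≤ 1 := by
        apply prod_le_one_aux
        intro x hx
        obtain ⟨y, hy, rfl⟩ := Multiset.mem_map.mp hx
        have hymem : y ∈ Q.roots := by rw [ht]; exact Multiset.mem_cons_of_mem hy
        exact ⟨norm_nonneg y, hroots y hymem⟩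
      have htnn : (0:ℝ) ≤ (t.map (fun x => ‖x‖)).prod :=
        Multiset.prod_nonneg (fun x hx => by
          obtain ⟨y, hy, rfl⟩ := Multiset.mem_map.mp hx
          exact norm_nonneg y)
      nlinarith
    rw [habs] at h1le
    linarith
  constructor
  · intro hu
    have := Polynomial.natDegree_eq_zero_of_isUnit hu
    rw [hFdeg] at this
    omega
  · intro g h hgh
    by_cases hg : IsUnit g
    · left; exact hg
    right
    have hgne : g ≠ 0 := fun hh => hFne (by rw [hgh, hh, zero_mul])
    have hhne : h ≠ 0 := fun hh => hFne (by rw [hgh, hh, mul_zero])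
    rcases Nat.eq_zero_or_pos g.natDegree with hdg | hdg
    · exfalso
      have hgC : g = C (g.coeff 0) := Polynomial.eq_C_of_natDegree_eq_zero hdg
      have hc0 : g.coeff 0 ∣ a 0 := ⟨h.coeff 0, by rw [← hcoeff0, hgh, Polynomial.mul_coeff_zero]⟩
      have hcn : g.coeff 0 ∣ a n := by
        refine ⟨h.leadingCoeff, ?_⟩
        rw [← hlead, hgh, Polynomial.leadingCoeff_mul]
        congr 1
        rw [hgC, Polynomial.leadingCoeff_C, Polynomial.coeff_C_zero]
      exact hg (hgC ▸ Polynomial.isUnit_C.mpr (hconst _ hc0 hcn))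
    rcases Nat.eq_zero_or_pos h.natDegree with hdh | hdh
    · have hhC : h = C (h.coeff 0) := Polynomial.eq_C_of_natDegree_eq_zero hdh
      have hc0 : h.coeff 0 ∣ a 0 := ⟨g.coeff 0, by rw [← hcoeff0, hgh, Polynomial.mul_coeff_zero]; ring⟩
      have hcn : h.coeff 0 ∣ a n := by
        refine ⟨g.leadingCoeff, ?_⟩
        rw [← hlead, hgh, Polynomial.leadingCoeff_mul]
        rw [hhC, Polynomial.leadingCoeff_C, Polynomial.coeff_C_zero]
        ring
      exact hhC ▸ Polynomial.isUnit_C.mpr (hconst _ hc0 hcn)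
    · exfalso
      have hleads : g.leadingCoeff * h.leadingCoeff = a n := by
        rw [← hlead, hgh, Polynomial.leadingCoeff_mul]
      have hnat : g.leadingCoeff.natAbs * h.leadingCoeff.natAbs = (a n).natAbs := by
        rw [← Int.natAbs_mul, hleads]
      rcases hp.eq_one_or_self_of_dvd g.leadingCoeff.natAbs ⟨_, hnat.symm⟩ with h1 | h1
      · exact hbig g h hgh hdg h1
      · have h2 : h.leadingCoeff.natAbs = 1 := by
          rw [h1] at hnat
          exact Nat.eq_of_mul_eq_mul_left hp.pos (hnat.trans (mul_one (a n).natAbs).symm)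
        exact hbig h g (by rw [hgh, mul_comm]) hdh h2
end

section
/- Let f(x) = a_n x^n + ... + a_0 ∈ ℤ[x] satisfy 0 < a_0 ≤ a_1 ≤ ... ≤ a_{k-1} < a_k < a_{k+1} ≤ ... ≤ a_n for some k with 0 ≤ k ≤ n-1. If there exists an integer m with |m| ≥ 2 such that |f(m)| is prime, then f is irreducible in ℤ[x]. -/
open Polynomial Finset

-- helper: |v| = 1, v.re = 1 → v = 1
lemma aux_unit_eq_one {v : ℂ} (h1 : ‖v‖ = 1) (h2 : v.re = 1) : v = 1 := by
  have hns : Complex.normSq v = 1 := by rw [Complex.normSq_eq_norm_sq, h1]; norm_num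
  have him : v.im = 0 := by
    have := Complex.normSq_apply v
    nlinarith [this, hns, h2]
  exact Complex.ext (by simp [h2]) (by simp [him])

lemma aux_root_lt_one (n k : ℕ) (a : ℕ → ℤ) (hn : 1 ≤ n) (hk1 : k + 1 ≤ n)
    (apos : ∀ i, i ≤ n → 0 < a i) (hmono : ∀ i, i < n → a i ≤ a (i + 1))
    (hstrict1 : 0 < k → a (k - 1) < a k) (hstrict2 : a k < a (k + 1))
    (z : ℂ) (hz : ∑ i ∈ Finset.range (n + 1), (a i : ℂ) * z ^ i = 0) :
    ‖z‖ < 1 := by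
  by_contra hge
  push_neg at hge  -- 1 ≤ ‖z‖
  -- key identity
  have key : (a n : ℂ) * z ^ (n + 1)
      = (a 0 : ℂ) + ∑ i ∈ Finset.range n, ((a (i + 1) : ℂ) - (a i : ℂ)) * z ^ (i + 1) := by
    have h1 : (z - 1) * ∑ i ∈ Finset.range (n + 1), (a i : ℂ) * z ^ i = 0 := by
      rw [hz, mul_zero]
    have h2 : (z - 1) * ∑ i ∈ Finset.range (n + 1), (a i : ℂ) * z ^ i
        = (a n : ℂ) * z ^ (n + 1) - (a 0 : ℂ)
          - ∑ i ∈ Finset.range n, ((a (i + 1) : ℂ) - (a i : ℂ)) * z ^ (i + 1) := by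
      rw [sub_mul, one_mul, Finset.mul_sum]
      have e1 : ∀ i : ℕ, z * ((a i : ℂ) * z ^ i) = (a i : ℂ) * z ^ (i + 1) := by
        intro i; ring
      simp_rw [e1]
      rw [Finset.sum_range_succ (f := fun i => (a i : ℂ) * z ^ (i + 1)),
        Finset.sum_range_succ' (f := fun i => (a i : ℂ) * z ^ i)]
      simp_rw [sub_mul]
      rw [Finset.sum_sub_distrib]
      simp only [pow_zero, mul_one]
      ring
    rw [h2] at h1
    linear_combination h1
  set A : ℝ := ‖z‖ with hA
  have hApos : (0 : ℝ) < A := lt_of_lt_of_le one_pos hge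
  -- |z| ≤ 1
  have habs : A ≤ 1 := by
    have step1 : (a n : ℝ) * A ^ (n + 1)
        ≤ (a 0 : ℝ) + ∑ i ∈ Finset.range n, ((a (i + 1) : ℝ) - (a i : ℝ)) * A ^ (i + 1) := by
      have := congrArg (‖·‖) key
      rw [norm_mul, norm_pow, Complex.norm_intCast] at this
      rw [abs_of_pos (by exact_mod_cast apos n le_rfl : (0:ℝ) < (a n : ℝ))] at this
      rw [this]
      refine le_trans (norm_add_le _ _) ?_
      rw [Complex.norm_intCast, abs_of_pos (by exact_mod_cast apos 0 (by omega) : (0:ℝ) < (a 0 : ℝ))]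
      gcongr
      refine le_trans (norm_sum_le _ _) ?_
      apply Finset.sum_le_sum
      intro i hi
      rw [norm_mul, norm_pow]
      have : ‖(a (i+1) : ℂ) - (a i : ℂ)‖ = (a (i+1) : ℝ) - (a i : ℝ) := by
        have : ((a (i+1) : ℂ) - (a i : ℂ)) = ((a (i+1) - a i : ℤ) : ℂ) := by push_cast; ring
        rw [this, Complex.norm_intCast, abs_of_nonneg]
        · push_cast; ring
        · simp only [Finset.mem_range] at hi
          exact_mod_cast sub_nonneg.mpr (hmono i hi)
      rw [this]
    have step2 : (a 0 : ℝ) + ∑ i ∈ Finset.range n, ((a (i + 1) : ℝ) - (a i : ℝ)) * A ^ (i + 1)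
        ≤ (a n : ℝ) * A ^ n := by
      have tel : ∑ i ∈ Finset.range n, ((a (i + 1) : ℝ) - (a i : ℝ)) = (a n : ℝ) - (a 0 : ℝ) :=
        Finset.sum_range_sub (fun i => (a i : ℝ)) n
      have hb : ∀ i ∈ Finset.range n, ((a (i + 1) : ℝ) - (a i : ℝ)) * A ^ (i + 1)
          ≤ ((a (i + 1) : ℝ) - (a i : ℝ)) * A ^ n := by
        intro i hi
        simp only [Finset.mem_range] at hi
        apply mul_le_mul_of_nonneg_left
        · exact pow_le_pow_right₀ hge (by omega)
        · exact_mod_cast sub_nonneg.mpr (hmono i hi)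
      have h3 := Finset.sum_le_sum hb
      rw [← Finset.sum_mul, tel] at h3
      have h4 : (a 0 : ℝ) ≤ (a 0 : ℝ) * A ^ n := by
        nlinarith [one_le_pow₀ hge (n := n), (by exact_mod_cast apos 0 (by omega) : (0:ℝ) < (a 0 : ℝ))]
      nlinarith
    have h5 : A ^ (n + 1) ≤ A ^ n := by
      have han : (0 : ℝ) < (a n : ℝ) := by exact_mod_cast apos n le_rfl
      have := le_trans step1 step2
      exact le_of_mul_le_mul_left this han
    rw [pow_succ] at h5
    have hpn : (0 : ℝ) < A ^ n := pow_pos hApos n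
    nlinarith
  have hA1 : A = 1 := le_antisymm habs hge
  -- equality analysis
  set w : ℂ := (starRingEnd ℂ) (z ^ (n + 1)) with hw
  have habsz : ∀ j : ℕ, ‖z ^ j‖ = 1 := by
    intro j; rw [norm_pow, ← hA, hA1, one_pow]
  have habsw : ‖w‖ = 1 := by rw [hw, Complex.norm_conj]; exact habsz _
  have hwz : z ^ (n + 1) * w = 1 := by
    rw [hw, Complex.mul_conj]
    norm_cast
    rw [Complex.normSq_eq_norm_sq, habsz]
    norm_num
  have keyw : (a n : ℂ) = (a 0 : ℂ) * w
      + ∑ i ∈ Finset.range n, ((a (i + 1) : ℂ) - (a i : ℂ)) * (z ^ (i + 1) * w) := by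
    calc (a n : ℂ) = (a n : ℂ) * (z ^ (n + 1) * w) := by rw [hwz, mul_one]
    _ = ((a n : ℂ) * z ^ (n + 1)) * w := by ring
    _ = ((a 0 : ℂ) + ∑ i ∈ Finset.range n, ((a (i + 1) : ℂ) - (a i : ℂ)) * z ^ (i + 1)) * w := by
        rw [key]
    _ = _ := by rw [add_mul, Finset.sum_mul]; congr 1; apply Finset.sum_congr rfl; intros; ring
  have hre : (a n : ℝ) = (a 0 : ℝ) * w.re
      + ∑ i ∈ Finset.range n, ((a (i + 1) : ℝ) - (a i : ℝ)) * (z ^ (i + 1) * w).re := by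
    have := congrArg Complex.re keyw
    rw [Complex.add_re, Complex.re_sum] at this
    simp only [Complex.mul_re, Complex.sub_re, Complex.sub_im, Complex.intCast_re,
      Complex.intCast_im, sub_zero, zero_mul, sub_self, mul_zero] at this ⊢
    convert this using 2 <;> simp
  have hterm : ∀ i ∈ Finset.range n, (z ^ (i + 1) * w).re ≤ 1 := by
    intro i _
    refine le_trans (Complex.re_le_norm _) ?_
    rw [norm_mul, habsz, habsw, one_mul]
  have hwre : w.re ≤ 1 := le_trans (Complex.re_le_norm _) (le_of_eq habsw)
  have hnn : ∀ i ∈ Finset.range n,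
      0 ≤ ((a (i + 1) : ℝ) - (a i : ℝ)) * (1 - (z ^ (i + 1) * w).re) := by
    intro i hi
    simp only [Finset.mem_range] at hi
    exact mul_nonneg (by exact_mod_cast sub_nonneg.mpr (hmono i hi))
      (sub_nonneg.mpr (hterm i (Finset.mem_range.mpr hi)))
  have h0nn : 0 ≤ (a 0 : ℝ) * (1 - w.re) :=
    mul_nonneg (by exact_mod_cast (apos 0 (by omega)).le) (sub_nonneg.mpr hwre)
  have htotal : (a 0 : ℝ) * (1 - w.re)
      + ∑ i ∈ Finset.range n, ((a (i + 1) : ℝ) - (a i : ℝ)) * (1 - (z ^ (i + 1) * w).re) = 0 := by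
    have tel : ∑ i ∈ Finset.range n, ((a (i + 1) : ℝ) - (a i : ℝ)) = (a n : ℝ) - (a 0 : ℝ) :=
      Finset.sum_range_sub (fun i => (a i : ℝ)) n
    have expand : ∑ i ∈ Finset.range n, ((a (i + 1) : ℝ) - (a i : ℝ)) * (1 - (z ^ (i + 1) * w).re)
        = (∑ i ∈ Finset.range n, ((a (i + 1) : ℝ) - (a i : ℝ)))
          - ∑ i ∈ Finset.range n, ((a (i + 1) : ℝ) - (a i : ℝ)) * (z ^ (i + 1) * w).re := by
      rw [← Finset.sum_sub_distrib]
      apply Finset.sum_congr rfl; intros; ring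
    rw [expand, tel]
    linarith [hre]
  have hsum0 : ∑ i ∈ Finset.range n,
      ((a (i + 1) : ℝ) - (a i : ℝ)) * (1 - (z ^ (i + 1) * w).re) = 0 := by
    have := Finset.sum_nonneg hnn
    linarith
  have hall := (Finset.sum_eq_zero_iff_of_nonneg hnn).mp hsum0
  have hw0 : (a 0 : ℝ) * (1 - w.re) = 0 := by
    have := Finset.sum_nonneg hnn
    linarith
  have hwre1 : w.re = 1 := by
    have ha0 : (0 : ℝ) < (a 0 : ℝ) := by exact_mod_cast apos 0 (by omega)
    rcases mul_eq_zero.mp hw0 with h | h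
    · linarith
    · linarith
  have hw1 : w = 1 := aux_unit_eq_one habsw hwre1
  have hpow1 : ∀ j ∈ Finset.range n, a j < a (j + 1) → z ^ (j + 1) = 1 := by
    intro j hj hlt
    have h1 := hall j hj
    have hd : (0 : ℝ) < (a (j + 1) : ℝ) - (a j : ℝ) := by exact_mod_cast sub_pos.mpr hlt
    have hre1 : (z ^ (j + 1) * w).re = 1 := by
      rcases mul_eq_zero.mp h1 with h | h
      · linarith
      · linarith
    have habs1 : ‖z ^ (j + 1) * w‖ = 1 := by rw [norm_mul, habsz, habsw, one_mul]
    have := aux_unit_eq_one habs1 hre1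
    rwa [hw1, mul_one] at this
  have hzk1 : z ^ (k + 1) = 1 := hpow1 k (Finset.mem_range.mpr (by omega)) hstrict2
  have hz1 : z = 1 := by
    rcases Nat.eq_zero_or_pos k with rfl | hkpos
    · simpa using hzk1
    · have hzk : z ^ k = 1 := by
        have := hpow1 (k - 1) (Finset.mem_range.mpr (by omega)) (by
          have := hstrict1 hkpos
          have hkk : k - 1 + 1 = k := by omega
          rwa [hkk])
        have hkk : k - 1 + 1 = k := by omega
        rwa [hkk] at this
      have : z ^ (k + 1) = z ^ k * z := pow_succ z k
      rw [hzk1, hzk, one_mul] at this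
      exact this.symm
  -- contradiction: f(1) > 0
  rw [hz1] at hz
  simp only [one_pow, mul_one] at hz
  have hcast : ((∑ i ∈ Finset.range (n + 1), a i : ℤ) : ℂ) = 0 := by push_cast; exact hz
  have hzero : (∑ i ∈ Finset.range (n + 1), a i : ℤ) = 0 := by exact_mod_cast hcast
  have hposum : (0 : ℤ) < ∑ i ∈ Finset.range (n + 1), a i := by
    apply Finset.sum_pos
    · intro i hi
      exact apos i (by simpa [Nat.lt_succ_iff] using hi)
    · exact ⟨0, Finset.mem_range.mpr (by omega)⟩
  omega

theorem stmt_8 (n k : ℕ) (a : ℕ → ℤ) (hn : 1 ≤ n) (hk : k ≤ n - 1)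
    (h0 : 0 < a 0)
    (hmono : ∀ i, i < n → a i ≤ a (i + 1))
    (hstrict1 : 0 < k → a (k - 1) < a k)
    (hstrict2 : a k < a (k + 1))
    (m : ℤ) (hm : 2 ≤ |m|)
    (hp : ((∑ i ∈ Finset.range (n + 1), Polynomial.C (a i) * Polynomial.X ^ i).eval m).natAbs.Prime) :
    Irreducible (∑ i ∈ Finset.range (n + 1), Polynomial.C (a i) * Polynomial.X ^ i) := by
  set f : ℤ[X] := ∑ i ∈ Finset.range (n + 1), C (a i) * X ^ i with hf
  have hk1 : k + 1 ≤ n := by omega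
  -- monotonicity up to n
  have hstep : ∀ j, j ≤ n → ∀ i, i ≤ j → a i ≤ a j := by
    intro j
    induction j with
    | zero => intro _ i hi; obtain rfl : i = 0 := Nat.le_zero.mp hi; exact le_refl _
    | succ j ih =>
      intro hj i hi
      rcases Nat.eq_or_lt_of_le hi with rfl | h
      · exact le_refl _
      · exact le_trans (ih (by omega) i (by omega)) (hmono j (by omega))
  have apos : ∀ i, i ≤ n → 0 < a i := fun i hi => lt_of_lt_of_le h0 (hstep i hi 0 (Nat.zero_le _))
  -- coefficients of f
  have hcoeff : ∀ i, f.coeff i = if i < n + 1 then a i else 0 := by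
    intro i
    rw [hf, Polynomial.finset_sum_coeff]
    simp only [Polynomial.coeff_C_mul, Polynomial.coeff_X_pow, mul_ite, mul_one, mul_zero]
    rw [Finset.sum_ite_eq (Finset.range (n + 1)) i (fun j => a j)]
    simp [Finset.mem_range]
  have hfn : f.coeff n = a n := by rw [hcoeff]; simp
  have hfne : f ≠ 0 := fun h => by
    have := hfn; rw [h] at this; simp at this
    exact absurd this.symm (ne_of_gt (apos n le_rfl))
  have hdeg : f.natDegree = n := by
    apply le_antisymm
    · rw [Polynomial.natDegree_le_iff_coeff_eq_zero]
      intro N hN; rw [hcoeff]; simp; omega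
    · apply Polynomial.le_natDegree_of_ne_zero
      rw [hfn]; exact ne_of_gt (apos n le_rfl)
  -- complex version
  set F : ℂ[X] := f.map (Int.castRingHom ℂ) with hF
  have hFeval : ∀ z : ℂ, F.eval z = ∑ i ∈ Finset.range (n + 1), (a i : ℂ) * z ^ i := by
    intro z
    rw [hF, hf, Polynomial.map_sum, Polynomial.eval_finset_sum]
    apply Finset.sum_congr rfl
    intro i _
    simp
  have hroots : ∀ z : ℂ, F.eval z = 0 → ‖z‖ < 1 := by
    intro z hz
    exact aux_root_lt_one n k a hn hk1 apos hmono hstrict1 hstrict2 z (by rw [← hFeval]; exact hz)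
  -- factor bound
  have hfactor : ∀ g : ℤ[X], g ∣ f → 1 ≤ g.natDegree → 1 < (g.eval m).natAbs := by
    intro g hdvd hg1
    have hg0 : g ≠ 0 := fun h => by rw [h] at hg1; simp at hg1
    set G : ℂ[X] := g.map (Int.castRingHom ℂ) with hG
    have hinj : Function.Injective (Int.castRingHom ℂ) := Int.cast_injective
    have hG0 : G ≠ 0 := (Polynomial.map_ne_zero_iff hinj).mpr hg0
    have hGdeg : G.natDegree = g.natDegree := Polynomial.natDegree_map_eq_of_injective hinj g
    have hdvdC : G ∣ F := Polynomial.map_dvd _ hdvd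
    have hzlt : ∀ z ∈ G.roots, 1 < ‖(m : ℂ) - z‖ := by
      intro z hzr
      have hGz : G.eval z = 0 := (Polynomial.mem_roots hG0).mp hzr
      have hFz : F.eval z = 0 := by
        obtain ⟨q, hq⟩ := hdvdC
        rw [hq, Polynomial.eval_mul, hGz, zero_mul]
      have hzl := hroots z hFz
      have h1 : ‖(m : ℂ)‖ - ‖z‖ ≤ ‖(m : ℂ) - z‖ :=
        norm_sub_norm_le _ _
      have h2 : (2 : ℝ) ≤ ‖(m : ℂ)‖ := by
        rw [Complex.norm_intCast]
        exact_mod_cast hm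
      linarith
    have hsplits : Polynomial.Splits G := IsAlgClosed.splits G
    have hprod := hsplits.eq_prod_roots
    have hcard : G.roots.card = G.natDegree := Polynomial.splits_iff_card_roots.mp hsplits
    have hcardpos : 0 < G.roots.card := by rw [hcard, hGdeg]; omega
    obtain ⟨z0, hz0mem⟩ := Multiset.card_pos_iff_exists_mem.mp hcardpos
    obtain ⟨s, hs⟩ := Multiset.exists_cons_of_mem hz0mem
    -- evaluate
    have hGeval : ‖G.eval (m : ℂ)‖
        = ‖G.leadingCoeff‖
          * (G.roots.map (fun z => ‖(m : ℂ) - z‖)).prod := by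
      conv_lhs => rw [hprod]
      rw [Polynomial.eval_mul, Polynomial.eval_C, Polynomial.eval_multiset_prod,
        Multiset.map_map, norm_mul]
      change _ * (normHom : ℂ →*₀ ℝ) _ = _
      rw [map_multiset_prod, Multiset.map_map]
      congr 2
      apply Multiset.map_congr rfl
      intro z _
      simp [Polynomial.eval_sub]
    have hlc : (1 : ℝ) ≤ ‖G.leadingCoeff‖ := by
      rw [hG, Polynomial.leadingCoeff_map_of_injective hinj]
      have hlc0 : g.leadingCoeff ≠ 0 := Polynomial.leadingCoeff_ne_zero.mpr hg0
      have : (1 : ℤ) ≤ |g.leadingCoeff| := Int.one_le_abs hlc0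
      have h2 : ((1 : ℤ) : ℝ) ≤ ((|g.leadingCoeff| : ℤ) : ℝ) := by exact_mod_cast this
      simpa [Complex.norm_intCast] using h2
    have hProd : (1 : ℝ) < (G.roots.map (fun z => ‖(m : ℂ) - z‖)).prod := by
      rw [hs, Multiset.map_cons, Multiset.prod_cons]
      have h1 : 1 < ‖(m : ℂ) - z0‖ := hzlt z0 hz0mem
      have h2 : (1 : ℝ) ≤ (s.map (fun z => ‖(m : ℂ) - z‖)).prod := by
        apply Multiset.one_le_prod
        intro x hx
        obtain ⟨z, hz, rfl⟩ := Multiset.mem_map.mp hx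
        exact le_of_lt (hzlt z (by rw [hs]; exact Multiset.mem_cons_of_mem hz))
      nlinarith
    have habsG : (1 : ℝ) < ‖G.eval (m : ℂ)‖ := by
      rw [hGeval]
      nlinarith
    have hGm : G.eval (m : ℂ) = ((g.eval m : ℤ) : ℂ) := by
      rw [hG, Polynomial.eval_intCast_map]
      rfl
    rw [hGm, Complex.norm_intCast] at habsG
    have h9 : (1 : ℤ) < |g.eval m| := by
      rw [← Int.cast_abs] at habsG
      exact_mod_cast habsG
    rw [Int.abs_eq_natAbs] at h9
    exact_mod_cast h9
  -- assemble irreducibility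
  have hunit : ∀ g h : ℤ[X], f = g * h → (g.eval m).natAbs = 1 → IsUnit g := by
    intro g h hgh h1
    have hgdvd : g ∣ f := ⟨h, hgh⟩
    have hdeg0 : g.natDegree = 0 := by
      by_contra hne
      have := hfactor g hgdvd (by omega)
      omega
    obtain ⟨c, hc⟩ := Polynomial.natDegree_eq_zero.mp hdeg0
    rw [← hc]
    apply Polynomial.isUnit_C.mpr
    apply Int.isUnit_iff_natAbs_eq.mpr
    rw [← hc] at h1
    simpa using h1
  constructor
  · intro hu
    have := Polynomial.natDegree_eq_zero_of_isUnit hu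
    rw [hdeg] at this
    omega
  · intro g h hgh
    have hev : (g.eval m).natAbs * (h.eval m).natAbs = (f.eval m).natAbs := by
      rw [hgh, Polynomial.eval_mul, Int.natAbs_mul]
    have hpp : (f.eval m).natAbs.Prime := hp
    have hdvd : (g.eval m).natAbs ∣ (f.eval m).natAbs := ⟨(h.eval m).natAbs, hev.symm⟩
    rcases hpp.eq_one_or_self_of_dvd _ hdvd with h1 | h2
    · exact Or.inl (hunit g h hgh h1)
    · right
      apply hunit h g (by rw [hgh, mul_comm])
      have hpos : (f.eval m).natAbs ≠ 0 := hpp.ne_zero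
      have h3 := hev
      rw [h2] at h3
      exact Nat.eq_of_mul_eq_mul_left (Nat.pos_of_ne_zero hpos) (by rw [mul_one]; exact h3)
end

section
/- Let f(x) = a_n x^n + ... + a_0 ∈ ℚ[x] and suppose a_i ≠ 0 and a_j ≠ 0 for some 0 ≤ i < j ≤ n. Suppose Σ_{l≠t} |a_l| ≤ q^t |a_t| for some index t with 0 ≤ t ≤ n, t ≠ i, t ≠ j, and some real q with 0 < q ≤ 1. If f has a zero α ∈ ℂ with q ≤ |α| ≤ 1, then Σ_{l≠t} |a_l| = q^t |a_t| and α^{2(j-i)} = 1. -/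
open Polynomial Finset

lemma sameRay_of_norm_sum_eq {ι : Type*} [DecidableEq ι] (s : Finset ι) (f : ι → ℂ)
    (h : ‖∑ l ∈ s, f l‖ = ∑ l ∈ s, ‖f l‖) {k : ι} (hk : k ∈ s) :
    SameRay ℝ (f k) (∑ l ∈ s, f l) := by
  have hsplit : ∑ l ∈ s, f l = f k + ∑ l ∈ s.erase k, f l :=
    (Finset.add_sum_erase s f hk).symm
  have hsplit' : ∑ l ∈ s, ‖f l‖ = ‖f k‖ + ∑ l ∈ s.erase k, ‖f l‖ :=
    (Finset.add_sum_erase s (fun l => ‖f l‖) hk).symm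
  have h1 : ‖f k + ∑ l ∈ s.erase k, f l‖ ≤ ‖f k‖ + ‖∑ l ∈ s.erase k, f l‖ :=
    norm_add_le _ _
  have h2 : ‖∑ l ∈ s.erase k, f l‖ ≤ ∑ l ∈ s.erase k, ‖f l‖ := norm_sum_le _ _
  have heq : ‖f k + ∑ l ∈ s.erase k, f l‖ = ‖f k‖ + ‖∑ l ∈ s.erase k, f l‖ := by
    rw [hsplit] at h; rw [hsplit'] at h; linarith
  have hray : SameRay ℝ (f k) (∑ l ∈ s.erase k, f l) := sameRay_iff_norm_add.mpr heq
  rw [hsplit]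
  exact (SameRay.refl (f k)).add_right hray

theorem stmt_10 (n i j t : ℕ) (a : ℕ → ℚ) (q : ℝ)
    (hij : i < j) (hjn : j ≤ n) (htn : t ≤ n)
    (hi : a i ≠ 0) (hj : a j ≠ 0) (hti : t ≠ i) (htj : t ≠ j)
    (hq0 : 0 < q) (hq1 : q ≤ 1)
    (hineq : ∑ l ∈ (Finset.range (n + 1)).erase t, (|a l| : ℝ) ≤ q ^ t * (|a t| : ℝ))
    (α : ℂ)
    (hα : Polynomial.aeval α (∑ l ∈ Finset.range (n + 1), Polynomial.C (a l) * Polynomial.X ^ l) = 0)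
    (hαlb : q ≤ ‖α‖) (hαub : ‖α‖ ≤ 1) :
    (∑ l ∈ (Finset.range (n + 1)).erase t, (|a l| : ℝ) = q ^ t * (|a t| : ℝ)) ∧
      α ^ (2 * (j - i)) = 1 := by
  have hα0 : α ≠ 0 := by
    intro h; rw [h] at hαlb; simp at hαlb; linarith
  have htmem : t ∈ Finset.range (n + 1) := Finset.mem_range.2 (Nat.lt_succ_of_le htn)
  have himem : i ∈ (Finset.range (n + 1)).erase t :=
    Finset.mem_erase.2 ⟨hti.symm, Finset.mem_range.2 (Nat.lt_succ_of_le (le_of_lt (lt_of_lt_of_le hij hjn)))⟩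
  have hjmem : j ∈ (Finset.range (n + 1)).erase t :=
    Finset.mem_erase.2 ⟨htj.symm, Finset.mem_range.2 (Nat.lt_succ_of_le hjn)⟩
  -- evaluate polynomial
  have hsum : ∑ l ∈ Finset.range (n + 1), ((a l : ℂ) * α ^ l) = 0 := by
    rw [← hα, map_sum]
    refine Finset.sum_congr rfl fun l _ => ?_
    simp [Polynomial.aeval_C]
  set S : ℂ := ∑ l ∈ (Finset.range (n + 1)).erase t, ((a l : ℂ) * α ^ l) with hS
  have hsplit : (a t : ℂ) * α ^ t + S = 0 := by
    rw [hS, Finset.add_sum_erase _ (fun l => (a l : ℂ) * α ^ l) htmem]; exact hsum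
  have hSeq : S = -((a t : ℂ) * α ^ t) := by linear_combination hsplit
  -- norms termwise
  have hterm : ∀ l, ‖(a l : ℂ) * α ^ l‖ = (|a l| : ℝ) * ‖α‖ ^ l := by
    intro l
    rw [norm_mul, norm_pow]
    push_cast
    congr 1
    rw [show ((a l : ℂ)) = ((a l : ℝ) : ℂ) by push_cast; ring, Complex.norm_real,
      Real.norm_eq_abs]
  -- the chain
  set A : ℝ := ∑ l ∈ (Finset.range (n + 1)).erase t, ‖(a l : ℂ) * α ^ l‖ with hA
  set B : ℝ := ∑ l ∈ (Finset.range (n + 1)).erase t, (|a l| : ℝ) with hB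
  have hSA : ‖S‖ ≤ A := norm_sum_le _ _
  have htermle : ∀ l ∈ (Finset.range (n + 1)).erase t,
      ‖(a l : ℂ) * α ^ l‖ ≤ (|a l| : ℝ) := by
    intro l _
    rw [hterm l]
    have h1 : ‖α‖ ^ l ≤ 1 := pow_le_one₀ (norm_nonneg α) hαub
    have h2 : (0:ℝ) ≤ (|a l| : ℝ) := by positivity
    nlinarith
  have hAB : A ≤ B := Finset.sum_le_sum htermle
  have hSnorm : ‖S‖ = (|a t| : ℝ) * ‖α‖ ^ t := by
    rw [hSeq, norm_neg, hterm t]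
  have hqt : q ^ t * (|a t| : ℝ) ≤ (|a t| : ℝ) * ‖α‖ ^ t := by
    have h1 : q ^ t ≤ ‖α‖ ^ t := pow_le_pow_left₀ (le_of_lt hq0) hαlb t
    have h2 : (0:ℝ) ≤ (|a t| : ℝ) := by positivity
    nlinarith
  -- all equalities
  have hBeq : B = q ^ t * (|a t| : ℝ) := le_antisymm hineq (by
    rw [hSnorm] at hSA; linarith)
  have hABeq : A = B := le_antisymm hAB (by rw [hSnorm] at hSA; linarith)
  have hSAeq : ‖S‖ = A := le_antisymm hSA (by rw [hSnorm]; linarith)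
  -- |α| = 1
  have htermeq : ∀ l ∈ (Finset.range (n + 1)).erase t,
      ‖(a l : ℂ) * α ^ l‖ = (|a l| : ℝ) := by
    intro l hl
    have h' := hABeq
    rw [hA, hB] at h'
    exact (Finset.sum_eq_sum_iff_of_le htermle).1 h' l hl
  have habs1 : ‖α‖ = 1 := by
    have hje := htermeq j hjmem
    rw [hterm j] at hje
    have haj : (0:ℝ) < (|a j| : ℝ) := by
      exact_mod_cast abs_pos.2 hj
    have hpj : ‖α‖ ^ j = 1 :=
      mul_left_cancel₀ (ne_of_gt haj) (by rw [mul_one]; exact hje)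
    by_contra hne
    have hlt : ‖α‖ < 1 := lt_of_le_of_ne hαub hne
    have hj1 : j ≠ 0 := by omega
    have : ‖α‖ ^ j < 1 := pow_lt_one₀ (norm_nonneg α) hlt hj1
    linarith [hpj]
  -- SameRay facts
  have hS0 : S ≠ 0 := by
    intro h
    rw [h, norm_zero] at hSnorm
    have hat : (0:ℝ) < (|a t| : ℝ) := by
      have hai : (0:ℝ) < (|a i| : ℝ) := by
        exact_mod_cast abs_pos.2 hi
      have hBpos : 0 < B := by
        have := Finset.single_le_sum (f := fun l => (|a l| : ℝ))
          (fun l _ => by positivity) himem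
        linarith
      rw [hBeq] at hBpos
      nlinarith [pow_pos hq0 t, abs_nonneg (a t)]
    rw [habs1, one_pow, mul_one] at hSnorm
    linarith
  have hSAeq' : ‖∑ l ∈ (Finset.range (n+1)).erase t, ((a l : ℂ) * α ^ l)‖
      = ∑ l ∈ (Finset.range (n+1)).erase t, ‖(a l : ℂ) * α ^ l‖ := by
    rw [← hS, ← hA]; exact hSAeq
  have hrayi : SameRay ℝ ((a i : ℂ) * α ^ i) S :=
    sameRay_of_norm_sum_eq _ _ hSAeq' himem
  have hrayj : SameRay ℝ ((a j : ℂ) * α ^ j) S :=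
    sameRay_of_norm_sum_eq _ _ hSAeq' hjmem
  have hrayij : SameRay ℝ ((a i : ℂ) * α ^ i) ((a j : ℂ) * α ^ j) :=
    hrayi.trans hrayj.symm (fun h => absurd h hS0)
  have hxi0 : (a i : ℂ) * α ^ i ≠ 0 := by
    apply mul_ne_zero _ (pow_ne_zero _ hα0)
    exact_mod_cast hi
  have hxj0 : (a j : ℂ) * α ^ j ≠ 0 := by
    apply mul_ne_zero _ (pow_ne_zero _ hα0)
    exact_mod_cast hj
  obtain ⟨r, hr0, hreq⟩ := hrayij.exists_pos_left hxi0 hxj0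
  -- derive α^(j-i) is real
  have hji : i + (j - i) = j := by omega
  have hpow : α ^ j = α ^ i * α ^ (j - i) := by rw [← pow_add, hji]
  have hz : (a j : ℂ) * α ^ (j - i) = (r : ℂ) * (a i : ℂ) := by
    have h2 : (r : ℂ) * ((a i : ℂ) * α ^ i) = (a j : ℂ) * α ^ j := by
      rw [← hreq, Complex.real_smul]
    rw [hpow] at h2
    have hαi : (α : ℂ) ^ i ≠ 0 := pow_ne_zero _ hα0
    apply mul_right_cancel₀ hαi
    linear_combination -h2
  set c : ℝ := r * (a i : ℝ) / (a j : ℝ) with hc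
  have haj0 : ((a j : ℝ)) ≠ 0 := by exact_mod_cast hj
  have hzc : α ^ (j - i) = (c : ℂ) := by
    have haj0' : ((a j : ℂ)) ≠ 0 := by exact_mod_cast hj
    rw [hc]
    push_cast
    field_simp
    linear_combination hz
  have hcabs : |c| = 1 := by
    have : ‖α ^ (j - i)‖ = 1 := by
      rw [norm_pow, habs1, one_pow]
    rw [hzc] at this
    rwa [Complex.norm_real, Real.norm_eq_abs] at this
  have hc2 : c ^ 2 = 1 := by
    have := sq_abs c
    rw [hcabs] at this
    simpa using this.symm
  constructor
  · exact hBeq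
  · rw [mul_comm, pow_mul, hzc]
    exact_mod_cast congrArg (fun x : ℝ => (x : ℂ)) hc2
end

section
/- If 2^(2^n) + 1 is prime for some natural number n ≥ 2, then the polynomial F(x) = (2^(2^n)+1) x^n + a_{n-1} x^{n-1} + ... + a_1 x + a_0 with 1 ≤ a_0 ≤ ... ≤ a_{k-1} < a_k < a_{k+1} ≤ ... ≤ a_{n-1} ≤ 2^(2^n)+1 for some 1 ≤ k ≤ n-1 is irreducible in ℤ[x]. -/
open Polynomial Finset


lemma mprod_le_one (s : Multiset ℝ) (h : ∀ x ∈ s, 0 ≤ x ∧ x ≤ 1) : s.prod ≤ 1 := by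
  induction s using Multiset.induction with
  | empty => simp
  | cons a t ih =>
    simp only [Multiset.prod_cons]
    obtain ⟨ha0, ha1⟩ := h a (by simp)
    have ht : ∀ x ∈ t, 0 ≤ x ∧ x ≤ 1 := fun x hx => h x (by simp [hx])
    have h1 := ih ht
    have h2 : (0:ℝ) ≤ t.prod := Multiset.prod_nonneg (fun x hx => (ht x hx).1)
    nlinarith

lemma mprod_lt_one (s : Multiset ℝ) (hne : s ≠ 0) (h : ∀ x ∈ s, 0 ≤ x ∧ x < 1) : s.prod < 1 := by
  obtain ⟨a, ha⟩ := Multiset.exists_mem_of_ne_zero hne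
  obtain ⟨t, rfl⟩ := Multiset.exists_cons_of_mem ha
  simp only [Multiset.prod_cons]
  obtain ⟨ha0, ha1⟩ := h a (by simp)
  have ht : ∀ x ∈ t, 0 ≤ x ∧ x ≤ 1 := fun x hx => ⟨(h x (by simp [hx])).1, le_of_lt (h x (by simp [hx])).2⟩
  have h1 := mprod_le_one t ht
  have h2 : (0:ℝ) ≤ t.prod := Multiset.prod_nonneg (fun x hx => (ht x hx).1)
  nlinarith

lemma telescope (n : ℕ) (a : ℕ → ℤ) (z : ℂ) :
    (a n : ℂ) * z ^ (n+1) - (a 0 : ℂ) - ∑ i ∈ range n, ((a (i+1) : ℂ) - (a i : ℂ)) * z ^ (i+1)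
      = (z - 1) * ∑ i ∈ range (n+1), (a i : ℂ) * z ^ i := by
  induction n with
  | zero => simp; ring
  | succ m ih =>
    rw [Finset.sum_range_succ (fun i => ((a (i+1) : ℂ) - (a i : ℂ)) * z ^ (i+1)),
        Finset.sum_range_succ (fun i => (a i : ℂ) * z ^ i)]
    rw [mul_add, ← ih]
    ring

lemma eq_one_of_abs_re (u : ℂ) (h1 : ‖u‖ = 1) (h2 : u.re = 1) : u = 1 := by
  have hn : Complex.normSq u = 1 := by
    have := Complex.sq_norm u
    rw [h1] at this; simpa using this.symm
  have : u.im = 0 := by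
    have h3 := Complex.normSq_apply u
    nlinarith
  exact Complex.ext h2 (by simp [this])

lemma rootBound (n k : ℕ) (a : ℕ → ℤ) (hn : 2 ≤ n)
    (h0 : 1 ≤ a 0)
    (hmono : ∀ i, i < n → a i ≤ a (i + 1))
    (hk1 : 1 ≤ k) (hk2 : k ≤ n - 1)
    (hstrict1 : a (k - 1) < a k)
    (hstrict2 : a k < a (k + 1))
    (z : ℂ) (hz : ∑ i ∈ range (n+1), (a i : ℂ) * z ^ i = 0) :
    ‖z‖ < 1 := by
  have hpos : ∀ i, i ≤ n → 1 ≤ a i := by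
    intro i
    induction i with
    | zero => intro _; exact h0
    | succ j ih => intro hj; exact le_trans (ih (by omega)) (hmono j (by omega))
  by_contra hcon
  push_neg at hcon
  set r := ‖z‖ with hr
  have E : (a n : ℂ) * z ^ (n+1) = (a 0 : ℂ) + ∑ i ∈ range n, ((a (i+1) : ℂ) - (a i : ℂ)) * z ^ (i+1) := by
    have := telescope n a z
    rw [hz, mul_zero] at this
    linear_combination this
  have hrpos : (0:ℝ) < r := lt_of_lt_of_le one_pos hcon
  have hrn : (0:ℝ) < r ^ n := pow_pos hrpos n
  have hsum : (a 0 : ℝ) + ∑ i ∈ range n, ((a (i+1) : ℝ) - (a i : ℝ)) = (a n : ℝ) := by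
    rw [Finset.sum_range_sub (fun i => (a i : ℝ))]; ring
  have habs1 : ∀ i, i < n → ‖(a (i+1) : ℂ) - (a i : ℂ)‖ = (a (i+1) : ℝ) - (a i : ℝ) := by
    intro i h
    have hc : ((a (i+1) : ℂ) - (a i : ℂ)) = (((a (i+1) - a i : ℤ)) : ℂ) := by push_cast; ring
    have hm := hmono i h
    rw [hc, Complex.norm_intCast, abs_of_nonneg (by exact_mod_cast sub_nonneg.mpr hm)]
    push_cast; ring
  have hanR : (0:ℝ) < (a n : ℝ) := by exact_mod_cast lt_of_lt_of_le one_pos (hpos n le_rfl)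
  -- Step A : r = 1
  have hr1 : r = 1 := by
    have hA : (a n : ℝ) * r ^ (n+1) ≤ (a 0 : ℝ) + ∑ i ∈ range n, ((a (i+1) : ℝ) - (a i : ℝ)) * r ^ (i+1) := by
      calc (a n : ℝ) * r ^ (n+1)
          = ‖(a n : ℂ) * z ^ (n+1)‖ := by
            rw [norm_mul, norm_pow, Complex.norm_intCast, abs_of_nonneg (by positivity)]
        _ = ‖(a 0 : ℂ) + ∑ i ∈ range n, ((a (i+1) : ℂ) - (a i : ℂ)) * z ^ (i+1)‖ := by rw [E]
        _ ≤ ‖(a 0 : ℂ)‖ + ‖∑ i ∈ range n, ((a (i+1) : ℂ) - (a i : ℂ)) * z ^ (i+1)‖ :=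
            norm_add_le _ _
        _ ≤ ‖(a 0 : ℂ)‖ + ∑ i ∈ range n, ‖((a (i+1) : ℂ) - (a i : ℂ)) * z ^ (i+1)‖ := by
            gcongr
            exact norm_sum_le _ _
        _ = (a 0 : ℝ) + ∑ i ∈ range n, ((a (i+1) : ℝ) - (a i : ℝ)) * r ^ (i+1) := by
            rw [Complex.norm_intCast, abs_of_nonneg (by exact_mod_cast le_of_lt (lt_of_lt_of_le one_pos h0))]
            congr 1
            apply Finset.sum_congr rfl
            intro i hi
            rw [norm_mul, norm_pow, habs1 i (mem_range.mp hi)]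
    have hB : (a 0 : ℝ) + ∑ i ∈ range n, ((a (i+1) : ℝ) - (a i : ℝ)) * r ^ (i+1) ≤ (a n : ℝ) * r ^ n := by
      have h1 : ∑ i ∈ range n, ((a (i+1) : ℝ) - (a i : ℝ)) * r ^ (i+1) ≤ ∑ i ∈ range n, ((a (i+1) : ℝ) - (a i : ℝ)) * r ^ n := by
        apply Finset.sum_le_sum
        intro i hi
        have hm : (0:ℝ) ≤ (a (i+1) : ℝ) - (a i : ℝ) := by
          have := hmono i (mem_range.mp hi); push_cast; linarith [(by exact_mod_cast this : ((a i : ℝ)) ≤ a (i+1))]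
        have : r ^ (i+1) ≤ r ^ n := pow_le_pow_right₀ hcon (by have := mem_range.mp hi; omega)
        nlinarith
      have h2 : (a 0 : ℝ) ≤ (a 0 : ℝ) * r ^ n := by
        have ha0 : (1:ℝ) ≤ (a 0 : ℝ) := by exact_mod_cast h0
        nlinarith [(one_le_pow₀ hcon : (1:ℝ) ≤ r ^ n)]
      calc (a 0 : ℝ) + ∑ i ∈ range n, ((a (i+1) : ℝ) - (a i : ℝ)) * r ^ (i+1)
          ≤ (a 0 : ℝ) * r ^ n + ∑ i ∈ range n, ((a (i+1) : ℝ) - (a i : ℝ)) * r ^ n := by linarith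
        _ = ((a 0 : ℝ) + ∑ i ∈ range n, ((a (i+1) : ℝ) - (a i : ℝ))) * r ^ n := by rw [add_mul, Finset.sum_mul]
        _ = (a n : ℝ) * r ^ n := by rw [hsum]
    have hle : r ^ (n+1) ≤ r ^ n := by
      have := le_trans hA hB
      nlinarith
    have : r ≤ 1 := by
      by_contra hgt
      push_neg at hgt
      have : r ^ n < r ^ (n+1) := by
        have := pow_lt_pow_right₀ hgt (Nat.lt_succ_self n)
        exact this
      linarith
    linarith
  -- Step B : z = 1
  have hzabs : ∀ m : ℕ, ‖z ^ m‖ = 1 := by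
    intro m; rw [norm_pow, ← hr, hr1, one_pow]
  set u := z ^ (n+1) with hu
  have huc : u * (starRingEnd ℂ) u = 1 := by
    rw [Complex.mul_conj]
    norm_cast
    rw [Complex.normSq_eq_norm_sq, hzabs (n+1), one_pow]
  have E2 : (a n : ℂ) = (a 0 : ℂ) * (starRingEnd ℂ) u + ∑ i ∈ range n, ((a (i+1) : ℂ) - (a i : ℂ)) * (z ^ (i+1) * (starRingEnd ℂ) u) := by
    have := congrArg (fun w => w * (starRingEnd ℂ) u) E
    simp only [add_mul, Finset.sum_mul] at this
    calc (a n : ℂ) = (a n : ℂ) * (u * (starRingEnd ℂ) u) := by rw [huc, mul_one]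
      _ = ((a n : ℂ) * z ^ (n+1)) * (starRingEnd ℂ) u := by rw [hu]; ring
      _ = _ := by rw [E]; rw [add_mul, Finset.sum_mul]; congr 1; apply Finset.sum_congr rfl; intro i _; ring
  -- take real parts
  have hre : (a n : ℝ) = (a 0 : ℝ) * ((starRingEnd ℂ) u).re + ∑ i ∈ range n, ((a (i+1) : ℝ) - (a i : ℝ)) * (z ^ (i+1) * (starRingEnd ℂ) u).re := by
    have := congrArg Complex.re E2
    simp only [Complex.add_re, Complex.intCast_re] at this
    rw [this]
    congr 1
    · rw [Complex.mul_re]; simp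
    · rw [Complex.re_sum]
      apply Finset.sum_congr rfl
      intro i _
      rw [Complex.mul_re]
      simp [Complex.sub_re, Complex.sub_im, Complex.intCast_re, Complex.intCast_im]
  have habsu : ∀ i : ℕ, ‖z ^ i * (starRingEnd ℂ) u‖ = 1 := by
    intro i
    rw [norm_mul, hzabs i, Complex.norm_conj, hu, hzabs (n+1), one_mul]
  -- each term nonneg, sum is zero
  have hterm : ∀ i ∈ range n, (0:ℝ) ≤ ((a (i+1) : ℝ) - (a i : ℝ)) * (1 - (z ^ (i+1) * (starRingEnd ℂ) u).re) := by
    intro i hi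
    apply mul_nonneg
    · have := hmono i (mem_range.mp hi); have : ((a i : ℝ)) ≤ a (i+1) := by exact_mod_cast this
      linarith
    · have h1 := Complex.re_le_norm (z ^ (i+1) * (starRingEnd ℂ) u)
      rw [habsu (i+1)] at h1; linarith
  have hzero : ∑ i ∈ range n, ((a (i+1) : ℝ) - (a i : ℝ)) * (1 - (z ^ (i+1) * (starRingEnd ℂ) u).re) = 0 := by
    have hc0 : (0:ℝ) ≤ (a 0 : ℝ) * (1 - ((starRingEnd ℂ) u).re) := by
      apply mul_nonneg
      · exact_mod_cast le_of_lt (lt_of_lt_of_le one_pos h0)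
      · have h1 := Complex.re_le_norm ((starRingEnd ℂ) u)
        rw [Complex.norm_conj, hu, hzabs (n+1)] at h1; linarith
    have hexp : (a 0 : ℝ) * (1 - ((starRingEnd ℂ) u).re) + ∑ i ∈ range n, ((a (i+1) : ℝ) - (a i : ℝ)) * (1 - (z ^ (i+1) * (starRingEnd ℂ) u).re) = 0 := by
      have : ∑ i ∈ range n, ((a (i+1) : ℝ) - (a i : ℝ)) * (1 - (z ^ (i+1) * (starRingEnd ℂ) u).re)
          = ∑ i ∈ range n, ((a (i+1) : ℝ) - (a i : ℝ)) - ∑ i ∈ range n, ((a (i+1) : ℝ) - (a i : ℝ)) * (z ^ (i+1) * (starRingEnd ℂ) u).re := by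
        rw [← Finset.sum_sub_distrib]
        apply Finset.sum_congr rfl; intro i _; ring
      rw [this]
      have := hre
      linarith [hsum]
    have hs := Finset.sum_nonneg hterm
    linarith
  have heach := (Finset.sum_eq_zero_iff_of_nonneg hterm).mp hzero
  -- apply at k-1 and k
  have hkn : k - 1 < n := by omega
  have hkn2 : k < n := by omega
  have hv1 : z ^ k * (starRingEnd ℂ) u = 1 := by
    have h := heach (k-1) (mem_range.mpr hkn)
    have hd : (0:ℝ) < (a (k-1+1) : ℝ) - (a (k-1) : ℝ) := by
      have : a (k-1) < a (k-1+1) := by rw [(by omega : k - 1 + 1 = k)]; exact hstrict1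
      have := this; push_cast; exact_mod_cast sub_pos.mpr this
    have hre1 : (z ^ (k-1+1) * (starRingEnd ℂ) u).re = 1 := by
      rcases mul_eq_zero.mp h with h' | h'
      · linarith
      · linarith
    rw [(by omega : k - 1 + 1 = k)] at hre1
    exact eq_one_of_abs_re _ (habsu k) hre1
  have hv2 : z ^ (k+1) * (starRingEnd ℂ) u = 1 := by
    have h := heach k (mem_range.mpr hkn2)
    have hd : (0:ℝ) < (a (k+1) : ℝ) - (a k : ℝ) := by exact_mod_cast sub_pos.mpr hstrict2
    have hre1 : (z ^ (k+1) * (starRingEnd ℂ) u).re = 1 := by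
      rcases mul_eq_zero.mp h with h' | h'
      · linarith
      · linarith
    exact eq_one_of_abs_re _ (habsu (k+1)) hre1
  have hz1 : z = 1 := by
    have : z * (z ^ k * (starRingEnd ℂ) u) = 1 := by rw [← hv2]; ring
    rw [hv1, mul_one] at this
    exact this
  -- contradiction : F(1) > 0
  rw [hz1] at hz
  simp only [one_pow, mul_one] at hz
  have hzz : ((∑ i ∈ range (n+1), a i : ℤ) : ℂ) = 0 := by push_cast; exact hz
  have hzz2 : (∑ i ∈ range (n+1), a i : ℤ) = 0 := by exact_mod_cast hzz
  have hpos2 : (0:ℤ) < ∑ i ∈ range (n+1), a i := by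
    apply Finset.sum_pos
    · intro i hi; exact lt_of_lt_of_le one_pos (hpos i (by have := mem_range.mp hi; omega))
    · exact ⟨0, mem_range.mpr (by omega)⟩
  omega
lemma factor_unit (F G : Polynomial ℤ) (hdvd : G ∣ F)
    (hroot : ∀ z : ℂ, (F.map (Int.castRingHom ℂ)).eval z = 0 → ‖z‖ < 1)
    (hF0 : F.coeff 0 ≠ 0)
    (hlu : IsUnit G.leadingCoeff) : IsUnit G := by
  have hGne : G ≠ 0 := by
    intro h
    rw [h, Polynomial.leadingCoeff_zero] at hlu
    exact hlu.ne_zero rfl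
  by_cases hd : G.natDegree = 0
  · obtain ⟨c, hc⟩ := Polynomial.natDegree_eq_zero.mp hd
    rw [← hc]
    apply Polynomial.isUnit_C.mpr
    rwa [← hc, Polynomial.leadingCoeff_C] at hlu
  · exfalso
    have hinj : Function.Injective (Int.castRingHom ℂ) := Int.cast_injective
    set Gc := G.map (Int.castRingHom ℂ) with hGc
    have hGcd : Gc.natDegree = G.natDegree := Polynomial.natDegree_map_eq_of_injective hinj G
    have hGcne : Gc ≠ 0 := (Polynomial.map_ne_zero_iff hinj).mpr hGne
    obtain ⟨Q, hFQ⟩ := hdvd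
    -- constant coeff of G nonzero
    have hG0 : G.coeff 0 ≠ 0 := by
      intro h
      apply hF0
      rw [hFQ, Polynomial.mul_coeff_zero, h, zero_mul]
    -- roots of Gc have abs < 1
    have hrootG : ∀ r ∈ Gc.roots, ‖r‖ < 1 := by
      intro r hr
      apply hroot
      have hr0 : Gc.eval r = 0 := (Polynomial.mem_roots hGcne).mp hr
      rw [hFQ, Polynomial.map_mul, Polynomial.eval_mul, hr0, zero_mul]
    -- roots nonempty
    have hdegpos : 0 < Gc.degree := by
      rw [Polynomial.natDegree_pos_iff_degree_pos.symm, hGcd]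
      omega
    obtain ⟨z0, hz0⟩ := Complex.exists_root hdegpos
    have hz0mem : z0 ∈ Gc.roots := (Polynomial.mem_roots hGcne).mpr hz0
    -- product formula
    have hsp : Gc.Splits := IsAlgClosed.splits Gc
    have heq := hsp.eq_prod_roots
    have heval : Gc.eval 0 = Gc.leadingCoeff * (Gc.roots.map (fun r => -r)).prod := by
      conv_lhs => rw [heq]
      rw [Polynomial.eval_mul, Polynomial.eval_C, Polynomial.eval_multiset_prod]
      congr 2
      rw [Multiset.map_map]
      congr 1
      funext r
      simp
    have habs : ‖Gc.eval 0‖ = ‖Gc.leadingCoeff‖ * ((Gc.roots.map (fun r => -r)).map (fun x => ‖x‖)).prod := by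
      rw [heval, norm_mul]; congr 1; exact map_multiset_prod (normHom : ℂ →*₀ ℝ) _
    -- leading coeff abs = 1
    have hlead1 : ‖Gc.leadingCoeff‖ = 1 := by
      have : Gc.leadingCoeff = ((G.leadingCoeff : ℤ) : ℂ) := by
        rw [hGc, Polynomial.leadingCoeff, Polynomial.natDegree_map_eq_of_injective hinj, Polynomial.coeff_map]
        rfl
      rw [this, Complex.norm_intCast]
      rcases Int.isUnit_iff.mp hlu with h | h <;> rw [h] <;> norm_num
    -- prod of abs < 1
    have hprod : ((Gc.roots.map (fun r => -r)).map (fun x => ‖x‖)).prod < 1 := by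
      apply mprod_lt_one
      · simp only [Multiset.map_eq_zero, ne_eq]
        intro h
        rw [h] at hz0mem
        exact absurd hz0mem (Multiset.notMem_zero z0)
      · intro x hx
        simp only [Multiset.mem_map] at hx
        obtain ⟨r, ⟨r', hr', rfl⟩, rfl⟩ := hx
        constructor
        · exact norm_nonneg _
        · rw [norm_neg]
          exact hrootG r' hr'
    -- but eval 0 is a nonzero integer
    have hevalint : Gc.eval 0 = ((G.coeff 0 : ℤ) : ℂ) := by
      rw [hGc, Polynomial.eval_map, Polynomial.eval₂_at_zero]
      rfl
    have hge : (1:ℝ) ≤ ‖Gc.eval 0‖ := by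
      rw [hevalint, Complex.norm_intCast]
      exact_mod_cast Int.one_le_abs hG0
    rw [habs, hlead1, one_mul] at hge
    linarith


theorem stmt_14 (n k : ℕ) (a : ℕ → ℤ) (hn : 2 ≤ n)
    (hFermat : Nat.Prime (2 ^ (2 ^ n) + 1))
    (han : a n = 2 ^ (2 ^ n) + 1)
    (h0 : 1 ≤ a 0)
    (hmono : ∀ i, i < n → a i ≤ a (i + 1))
    (hk1 : 1 ≤ k) (hk2 : k ≤ n - 1)
    (hstrict1 : a (k - 1) < a k)
    (hstrict2 : a k < a (k + 1)) :
    Irreducible (∑ i ∈ Finset.range (n + 1), Polynomial.C (a i) * Polynomial.X ^ i) := by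
  set F : ℤ[X] := ∑ i ∈ Finset.range (n + 1), Polynomial.C (a i) * Polynomial.X ^ i with hF
  have hcoeff : ∀ m, F.coeff m = if m ≤ n then a m else 0 := by
    intro m
    rw [hF, Polynomial.finset_sum_coeff]
    simp only [Polynomial.coeff_C_mul, Polynomial.coeff_X_pow, mul_ite, mul_one, mul_zero]
    rw [Finset.sum_ite_eq (range (n+1)) m a]
    simp [Nat.lt_succ_iff]
  have hdeg : F.natDegree = n := by
    apply le_antisymm
    · rw [Polynomial.natDegree_le_iff_coeff_eq_zero]
      intro m hm
      rw [hcoeff]; simp [Nat.not_le.mpr hm]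
    · apply Polynomial.le_natDegree_of_ne_zero
      rw [hcoeff]; simp
      have : (0:ℤ) < 2 ^ 2 ^ n + 1 := by positivity
      omega
  have hlead : F.leadingCoeff = a n := by
    rw [Polynomial.leadingCoeff, hdeg, hcoeff]; simp
  have hF0 : F.coeff 0 = a 0 := by rw [hcoeff]; simp
  have hev : ∀ z : ℂ, (F.map (Int.castRingHom ℂ)).eval z = ∑ i ∈ range (n+1), (a i : ℂ) * z ^ i := by
    intro z
    rw [hF, Polynomial.map_sum, Polynomial.eval_finset_sum]
    apply Finset.sum_congr rfl
    intro i _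
    simp
  have hroot : ∀ z : ℂ, (F.map (Int.castRingHom ℂ)).eval z = 0 → ‖z‖ < 1 := by
    intro z h
    exact rootBound n k a hn h0 hmono hk1 hk2 hstrict1 hstrict2 z (by rw [← hev z]; exact h)
  have hF0ne : F.coeff 0 ≠ 0 := by rw [hF0]; omega
  have hp : Prime (a n) := by
    rw [han]
    have := Nat.prime_iff_prime_int.mp hFermat
    push_cast at this
    exact this
  constructor
  · intro hu
    have := Polynomial.natDegree_eq_zero_of_isUnit hu
    rw [hdeg] at this
    omega
  · intro G H hGH
    have hl : a n = G.leadingCoeff * H.leadingCoeff := by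
      rw [← hlead, hGH, Polynomial.leadingCoeff_mul]
    rcases hp.irreducible.isUnit_or_isUnit hl with h | h
    · left; exact factor_unit F G ⟨H, hGH⟩ hroot hF0ne h
    · right; exact factor_unit F H ⟨G, by rw [hGH]; ring⟩ hroot hF0ne h
end

section
/- The polynomial f(x) = 2^51 x^10 + 2^10 x^9 − 2^11 x^8 + 2^15 x^7 − 2^16 x^6 − 1 is irreducible in ℤ[x]. -/
open Polynomial

noncomputable def fpoly : Polynomial ℤ :=
  Polynomial.C (2 ^ 51) * Polynomial.X ^ 10 + Polynomial.C (2 ^ 10) * Polynomial.X ^ 9 -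
      Polynomial.C (2 ^ 11) * Polynomial.X ^ 8 + Polynomial.C (2 ^ 15) * Polynomial.X ^ 7 -
      Polynomial.C (2 ^ 16) * Polynomial.X ^ 6 - 1

lemma fpoly_eval2 : fpoly.eval 2 = 2 ^ 61 - 1 := by
  norm_num [fpoly]

lemma fpoly_coeff0 : fpoly.coeff 0 = -1 := by
  simp [fpoly, coeff_one]

lemma fpoly_natDegree : fpoly.natDegree = 10 := by
  unfold fpoly
  compute_degree!

lemma root_bound (z : ℂ) (hz : (fpoly.map (Int.castRingHom ℂ)).eval z = 0) :
    ‖z‖ < 1 := by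
  by_contra h
  push_neg at h
  simp only [fpoly, Polynomial.map_add, Polynomial.map_sub, Polynomial.map_mul,
    Polynomial.map_pow, Polynomial.map_one, map_C, map_X, eval_add, eval_sub, eval_mul,
    eval_pow, eval_C, eval_X, eval_one] at hz
  have hz' : ((2:ℂ) ^ 51) * z ^ 10 =
      -((2:ℂ)^10 * z^9) + (2:ℂ)^11 * z^8 - (2:ℂ)^15 * z^7 + (2:ℂ)^16 * z^6 + 1 := by
    simp only [eq_intCast] at hz
    push_cast at hz ⊢
    linear_combination hz
  set r := ‖z‖ with hr
  have key : (2:ℝ)^51 * r^10 ≤ 2^10*r^9 + 2^11*r^8 + 2^15*r^7 + 2^16*r^6 + 1 := by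
    calc (2:ℝ)^51 * r^10 = ‖(2:ℂ)^51 * z^10‖ := by
          simp [norm_mul, norm_pow, hr]
      _ = ‖-((2:ℂ)^10 * z^9) + (2:ℂ)^11 * z^8 - (2:ℂ)^15 * z^7 + (2:ℂ)^16 * z^6 + 1‖ := by
          rw [hz']
      _ ≤ 2^10*r^9 + 2^11*r^8 + 2^15*r^7 + 2^16*r^6 + 1 := by
          have t1 := norm_add_le (-((2:ℂ)^10 * z^9) + (2:ℂ)^11 * z^8 - (2:ℂ)^15 * z^7 + (2:ℂ)^16 * z^6) 1
          have t2 := norm_add_le (-((2:ℂ)^10 * z^9) + (2:ℂ)^11 * z^8 - (2:ℂ)^15 * z^7) ((2:ℂ)^16 * z^6)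
          have t3 := norm_sub_le (-((2:ℂ)^10 * z^9) + (2:ℂ)^11 * z^8) ((2:ℂ)^15 * z^7)
          have t4 := norm_add_le (-((2:ℂ)^10 * z^9)) ((2:ℂ)^11 * z^8)
          simp only [norm_mul, norm_pow, norm_neg, norm_one, Complex.norm_two, ← hr] at t1 t2 t3 t4
          norm_num at t1 t2 t3 t4 ⊢
          linarith
  have h9 : (1:ℝ) ≤ r ^ 9 := one_le_pow₀ h
  have h6 : r^6 ≤ r^9 := pow_le_pow_right₀ h (by norm_num)
  have h7 : r^7 ≤ r^9 := pow_le_pow_right₀ h (by norm_num)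
  have h8 : r^8 ≤ r^9 := pow_le_pow_right₀ h (by norm_num)
  have h10 : r^9 ≤ r^10 := pow_le_pow_right₀ h (by norm_num)
  nlinarith [h9, h6, h7, h8, h10]

lemma fpoly_ne_zero : fpoly ≠ 0 := by
  intro h
  have := fpoly_eval2
  rw [h] at this
  norm_num at this

lemma key_lemma (g : Polynomial ℤ) (hdvd : g ∣ fpoly) (hdeg : 1 ≤ g.natDegree) :
    ¬ IsUnit (g.eval 2) := by
  intro hu
  have habs1 : |g.eval 2| = 1 := Int.isUnit_iff.mp hu |>.elim (by intro h; rw [h]; rfl)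
    (by intro h; rw [h]; rfl)
  have hg0 : g ≠ 0 := by
    rintro rfl
    simp at hdeg
  set G := g.map (Int.castRingHom ℂ) with hG
  have hinj : Function.Injective (Int.castRingHom ℂ) := Int.cast_injective
  have hGne : G ≠ 0 := by
    rw [hG, Ne, Polynomial.map_eq_zero_iff hinj]
    exact hg0
  have hsplit : G.Splits := IsAlgClosed.splits G
  have hfact := hsplit.eq_prod_roots
  have heval : G.eval 2 = G.leadingCoeff * ((G.roots.map fun a => 2 - a).prod) := by
    conv_lhs => rw [hfact]
    simp [eval_multiset_prod, Multiset.map_map, Function.comp]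
  have habs : ‖G.eval 2‖ =
      ‖G.leadingCoeff‖ * ((G.roots.map fun a => ‖2 - a‖).prod) := by
    rw [heval, norm_mul, show ‖(G.roots.map fun a => 2 - a).prod‖ = normHom (G.roots.map fun a => 2 - a).prod from rfl, map_multiset_prod, Multiset.map_map]
    rfl
  -- leading coeff
  have hlc : G.leadingCoeff = ((g.leadingCoeff : ℤ) : ℂ) := Polynomial.leadingCoeff_map_of_injective hinj g
  have hlc1 : 1 ≤ ‖G.leadingCoeff‖ := by
    rw [hlc, Complex.norm_intCast]
    exact_mod_cast Int.one_le_abs (by simpa using hg0)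
  -- roots are roots of fpoly
  have hroot : ∀ a ∈ G.roots, 1 < ‖2 - a‖ := by
    intro a ha
    have haG : G.eval a = 0 := Polynomial.isRoot_of_mem_roots ha
    have hdvd' : G ∣ fpoly.map (Int.castRingHom ℂ) := Polynomial.map_dvd _ hdvd
    obtain ⟨q, hq⟩ := hdvd'
    have haF : (fpoly.map (Int.castRingHom ℂ)).eval a = 0 := by
      rw [hq, eval_mul, haG, zero_mul]
    have hb := root_bound a haF
    have h2 : (2:ℝ) ≤ ‖2 - a‖ + ‖a‖ := by
      calc (2:ℝ) = ‖(2:ℂ)‖ := by simp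
        _ = ‖(2 - a) + a‖ := by ring_nf
        _ ≤ _ := norm_add_le _ _
    linarith
  -- card of roots
  have hcard : G.roots.card = g.natDegree := by
    rw [Polynomial.splits_iff_card_roots.mp hsplit]
    exact Polynomial.natDegree_map_eq_of_injective hinj g
  have hprod : 1 < (G.roots.map fun a => ‖2 - a‖).prod := by
    have hne : G.roots ≠ 0 := by
      intro h
      rw [h] at hcard
      simp at hcard
      omega
    obtain ⟨a, ha⟩ := Multiset.exists_mem_of_ne_zero hne
    have : G.roots.map (fun a => ‖2 - a‖) =
        ‖2 - a‖ ::ₘ ((G.roots.erase a).map fun a => ‖2 - a‖) := by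
      conv_lhs => rw [← Multiset.cons_erase ha]
      rw [Multiset.map_cons]
    rw [this, Multiset.prod_cons]
    have h1 : 1 ≤ ((G.roots.erase a).map fun a => ‖2 - a‖).prod := by
      apply Multiset.one_le_prod
      intro x hx
      obtain ⟨b, hb, rfl⟩ := Multiset.mem_map.mp hx
      exact le_of_lt (hroot b (Multiset.mem_of_mem_erase hb))
    have h2 := hroot a ha
    nlinarith
  have hbig : 1 < ‖G.eval 2‖ := by
    rw [habs]
    nlinarith
  have hsmall : ‖G.eval 2‖ = 1 := by
    have hev : G.eval 2 = ((g.eval 2 : ℤ) : ℂ) := by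
      rw [hG, eval_map, show (2:ℂ) = (Int.castRingHom ℂ) 2 by norm_num, eval₂_at_apply]
      simp
    rw [hev, Complex.norm_intCast]
    exact_mod_cast habs1
  linarith

theorem stmt_16 :
    Irreducible ((Polynomial.C (2 ^ 51) * Polynomial.X ^ 10 + Polynomial.C (2 ^ 10) * Polynomial.X ^ 9 -
      Polynomial.C (2 ^ 11) * Polynomial.X ^ 8 + Polynomial.C (2 ^ 15) * Polynomial.X ^ 7 -
      Polynomial.C (2 ^ 16) * Polynomial.X ^ 6 - 1 : Polynomial ℤ)) := by
  rw [show (Polynomial.C (2 ^ 51) * Polynomial.X ^ 10 + Polynomial.C (2 ^ 10) * Polynomial.X ^ 9 -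
      Polynomial.C (2 ^ 11) * Polynomial.X ^ 8 + Polynomial.C (2 ^ 15) * Polynomial.X ^ 7 -
      Polynomial.C (2 ^ 16) * Polynomial.X ^ 6 - 1 : Polynomial ℤ) = fpoly from rfl]
  constructor
  · intro hu
    obtain ⟨r, hr, hrf⟩ := Polynomial.isUnit_iff.mp hu
    have := fpoly_natDegree
    rw [← hrf, natDegree_C] at this
    exact absurd this (by norm_num)
  · intro a b hab
    by_contra hcon
    push_neg at hcon
    obtain ⟨ha, hb⟩ := hcon
    -- neither a nor b is constant
    have hconst : ∀ p q : Polynomial ℤ, fpoly = p * q → p.natDegree = 0 → IsUnit p := by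
      intro p q hpq hp0
      have hpC : p = Polynomial.C (p.coeff 0) := Polynomial.eq_C_of_natDegree_eq_zero hp0
      have hc : p.coeff 0 * q.coeff 0 = -1 := by
        have := fpoly_coeff0
        rw [hpq, Polynomial.mul_coeff_zero] at this
        exact this
      have : IsUnit (p.coeff 0) := IsUnit.of_mul_eq_one (- q.coeff 0) (by linarith [hc])
      rw [hpC]
      exact this.map Polynomial.C
    have hda : 1 ≤ a.natDegree := by
      rcases Nat.eq_zero_or_pos a.natDegree with h | h
      · exact absurd (hconst a b hab h) ha
      · exact h
    have hdb : 1 ≤ b.natDegree := by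
      rcases Nat.eq_zero_or_pos b.natDegree with h | h
      · exact absurd (hconst b a (by rw [hab, mul_comm]) h) hb
      · exact h
    have hprime : Prime ((2:ℤ) ^ 61 - 1) := by
      have h1 : (mersenne 61).Prime := lucas_lehmer_sufficiency _ (by norm_num) (by norm_num)
      have h2 : ((2:ℤ)^61 - 1) = ((mersenne 61 : ℕ) : ℤ) := by norm_num [mersenne]
      rw [h2]
      exact_mod_cast Nat.prime_iff_prime_int.mp h1
    have heval : a.eval 2 * b.eval 2 = 2 ^ 61 - 1 := by
      rw [← eval_mul, ← hab, fpoly_eval2]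
    rcases hprime.irreducible.isUnit_or_isUnit heval.symm with h | h
    · exact key_lemma a ⟨b, hab⟩ hda h
    · exact key_lemma b ⟨a, by rw [hab, mul_comm]⟩ hdb h
end
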